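/- arXiv:1504.02355 — 6 statements merged into one kernel-verified Lean document; each statement's English description precedes it below -/
import Mathlib

section
/- Let A be a unital Banach algebra and let C : ℝ → A be a cosine family, i.e. C(0) = 1 and C(t+s) + C(t−s) = 2·C(t)·C(s) for all s, t ∈ ℝ. If limsup_{t→∞} ‖C(t) − 1‖ = 0 (equivalently, lim_{t→∞} ‖C(t) − 1‖ = 0), then C(t) = 1 for all t ∈ ℝ. -/
open scoped ENNReal NNReal

open Filter Topology

/-- If `C : ℝ → A` is a cosine family in a unital Banach algebra `A` and
`limsup_{t → ∞} ‖C t - 1‖ = 0`, then `C t = 1` for all `t`. -/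
theorem cosine_limsup_infty_zero {A : Type*} [NormedRing A] [NormOneClass A]
    [CompleteSpace A] (C : ℝ → A)
    (hC0 : C 0 = 1)
    (hC : ∀ s t : ℝ, C (t + s) + C (t - s) = 2 * (C t * C s))
    (h : Filter.limsup (fun t : ℝ => (‖C t - 1‖₊ : ℝ≥0∞)) Filter.atTop = 0) :
    ∀ t : ℝ, C t = 1 := by
  -- From the limsup hypothesis, the ℝ≥0∞-valued function tends to 0.
  have htend0 : Tendsto (fun t : ℝ => (‖C t - 1‖₊ : ℝ≥0∞)) atTop (𝓝 0) := by
    have hinf : liminf (fun t : ℝ => (‖C t - 1‖₊ : ℝ≥0∞)) atTop = 0 := by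
      apply le_antisymm
      · rw [← h]; exact liminf_le_limsup
      · exact zero_le
    exact tendsto_of_liminf_eq_limsup hinf h
  -- Hence `C → 1` at infinity.
  have hC1 : Tendsto C atTop (𝓝 (1 : A)) := by
    have h1 : Tendsto (fun t : ℝ => (‖C t - 1‖₊ : ℝ≥0)) atTop (𝓝 0) := by
      rw [← ENNReal.tendsto_coe]
      simpa using htend0
    have h2 : Tendsto (fun t : ℝ => ‖C t - 1‖) atTop (𝓝 0) := by
      simpa [← coe_nnnorm] using (NNReal.tendsto_coe (f := atTop)).2 h1
    exact tendsto_sub_nhds_zero_iff.1 (tendsto_zero_iff_norm_tendsto_zero.2 h2)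
  intro x
  -- For all t, C x = 2*(C t * C (t - x)) - C (2*t - x).
  have key : ∀ t : ℝ, C x = 2 * (C t * C (t - x)) - C (2 * t - x) := by
    intro t
    have := hC (t - x) t
    have h1 : t + (t - x) = 2 * t - x := by ring
    have h2 : t - (t - x) = x := by ring
    rw [h1, h2] at this
    rw [← this]; abel
  have htend : Tendsto (fun t : ℝ => 2 * (C t * C (t - x)) - C (2 * t - x)) atTop
      (𝓝 ((2 : A) * (1 * 1) - 1)) := by
    have ha : Tendsto (fun t : ℝ => C (t - x)) atTop (𝓝 (1 : A)) :=
      hC1.comp (tendsto_atTop_add_const_right _ (-x) tendsto_id |>.congr (by intro t; simp [sub_eq_add_neg]))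
    have hb : Tendsto (fun t : ℝ => C (2 * t - x)) atTop (𝓝 (1 : A)) := by
      apply hC1.comp
      have : Tendsto (fun t : ℝ => 2 * t) atTop atTop :=
        (tendsto_id (α := ℝ) (x := atTop)).const_mul_atTop two_pos
      exact (tendsto_atTop_add_const_right _ (-x) this).congr
        (fun t => by ring)
    exact ((tendsto_const_nhds.mul (hC1.mul ha))).sub hb
  have : Tendsto (fun _ : ℝ => C x) atTop (𝓝 ((2 : A) * (1 * 1) - 1)) :=
    htend.congr (fun t => (key t).symm)
  have := tendsto_nhds_unique tendsto_const_nhds this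
  rw [this]; norm_num
end

section
/- Let c : ℝ → ℂ be a scalar cosine family, i.e. c(0) = 1 and c(t+s) + c(t−s) = 2·c(t)·c(s) for all s, t ∈ ℝ. Then limsup_{t→∞} |c(t) − 1|, computed in the extended nonnegative reals, belongs to the set {0, 2, +∞}. Moreover, if limsup_{t→∞} |c(t) − 1| = 0, then c(t) = 1 for all t ∈ ℝ. -/
open scoped ENNReal Real NNReal

open Filter

/-- d'Alembert identity for complex cosine. -/
private lemma cos_dal (x y : ℂ) :
    Complex.cos (x + y) + Complex.cos (x - y) = 2 * (Complex.cos x * Complex.cos y) := by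
  rw [Complex.cos_add, Complex.cos_sub]; ring

/-- A cosine family is even. -/
private lemma ceven (c : ℝ → ℂ) (hc0 : c 0 = 1)
    (hc : ∀ s t : ℝ, c (t + s) + c (t - s) = 2 * (c t * c s)) (s : ℝ) :
    c (-s) = c s := by
  have h := hc s 0
  rw [hc0, zero_add, zero_sub, one_mul] at h
  linear_combination h

/-- Orbit formula: if `cos w = c s` then `c (n s) = cos (n w)`. -/
private lemma orbit (c : ℝ → ℂ) (hc0 : c 0 = 1)
    (hc : ∀ s t : ℝ, c (t + s) + c (t - s) = 2 * (c t * c s))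
    (s : ℝ) (w : ℂ) (hw : Complex.cos w = c s) :
    ∀ n : ℕ, c ((n : ℝ) * s) = Complex.cos ((n : ℂ) * w) := by
  have key : ∀ n : ℕ, c ((n : ℝ) * s) = Complex.cos ((n : ℂ) * w) ∧
      c (((n : ℝ) + 1) * s) = Complex.cos (((n : ℂ) + 1) * w) := by
    intro n
    induction n with
    | zero =>
      constructor
      · simpa using hc0
      · simpa using hw.symm
    | succ n ih =>
      obtain ⟨ih1, ih2⟩ := ih
      constructor
      · push_cast
        exact ih2
      · push_cast
        have h := hc s (((n : ℝ) + 1) * s)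
        have e1 : ((n : ℝ) + 1) * s + s = ((n : ℝ) + 1 + 1) * s := by ring
        have e2 : ((n : ℝ) + 1) * s - s = (n : ℝ) * s := by ring
        rw [e1, e2] at h
        have hco : Complex.cos (((n : ℂ) + 1 + 1) * w) =
            2 * (Complex.cos (((n : ℂ) + 1) * w) * Complex.cos w) -
              Complex.cos ((n : ℂ) * w) := by
          have h2 := cos_dal (((n : ℂ) + 1) * w) w
          have e3 : ((n : ℂ) + 1) * w + w = ((n : ℂ) + 1 + 1) * w := by ring
          have e4 : ((n : ℂ) + 1) * w - w = (n : ℂ) * w := by ring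
          rw [e3, e4] at h2
          linear_combination h2
        rw [hco, ← ih1, ← ih2, hw]
        linear_combination h
  exact fun n => (key n).1

/-- Lower bound for the norm of complex cosine. -/
private lemma norm_cos_ge (z : ℂ) : Real.sinh |z.im| ≤ ‖Complex.cos z‖ := by
  have hdef : Complex.cos z = (Complex.exp (z * Complex.I) + Complex.exp (-z * Complex.I)) / 2 :=
    rfl
  have h1 : ‖Complex.exp (z * Complex.I)‖ = Real.exp (-z.im) := by
    rw [Complex.norm_exp, Complex.mul_I_re]
  have h2 : ‖Complex.exp (-z * Complex.I)‖ = Real.exp z.im := by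
    rw [Complex.norm_exp, Complex.mul_I_re]
    simp
  have key : ∀ a b : ℂ, ‖a‖ - ‖b‖ ≤ ‖a + b‖ := by
    intro a b
    have := norm_sub_norm_le a (-b)
    simpa [sub_neg_eq_add] using this
  have hnorm : ‖Complex.cos z‖ =
      ‖Complex.exp (z * Complex.I) + Complex.exp (-z * Complex.I)‖ / 2 := by
    rw [hdef, norm_div]
    norm_num
  rcases abs_cases z.im with ⟨he, _⟩ | ⟨he, _⟩
  · rw [he, Real.sinh_eq, hnorm]
    have h3 := key (Complex.exp (-z * Complex.I)) (Complex.exp (z * Complex.I))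
    rw [h1, h2, add_comm (Complex.exp (-z * Complex.I))] at h3
    linarith
  · rw [he, Real.sinh_eq, hnorm]
    have h3 := key (Complex.exp (z * Complex.I)) (Complex.exp (-z * Complex.I))
    rw [h1, h2] at h3
    have : Real.exp (- z.im) - Real.exp (-(-z.im)) =
        Real.exp (-z.im) - Real.exp z.im := by ring_nf
    rw [this]
    linarith

/-- If the family is eventually bounded, then every value is a cosine of a real number. -/
private lemma real_valued (c : ℝ → ℂ) (hc0 : c 0 = 1)
    (hc : ∀ s t : ℝ, c (t + s) + c (t - s) = 2 * (c t * c s))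
    (T r : ℝ) (hb : ∀ t : ℝ, T ≤ t → ‖c t - 1‖ ≤ r) (s : ℝ) :
    ∃ v : ℝ, c s = Complex.cos (v : ℂ) := by
  have hr0 : 0 ≤ r := le_trans (norm_nonneg _) (hb T le_rfl)
  have key : ∀ s : ℝ, 0 < s → ∃ v : ℝ, c s = Complex.cos (v : ℂ) := by
    intro s hs
    obtain ⟨w, hw⟩ := Complex.cos_surjective (c s)
    have horb := orbit c hc0 hc s w hw
    by_cases him : w.im = 0
    · refine ⟨w.re, ?_⟩
      rw [← hw]
      congr 1
      exact (Complex.ext (by simp) (by simp [him])).symm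
    · exfalso
      set y := |w.im| with hy
      have hy0 : 0 < y := abs_pos.2 him
      obtain ⟨n, hn⟩ := exists_nat_gt (max (T / s) ((r + 1) / y))
      have hn1 : T / s < (n : ℝ) := lt_of_le_of_lt (le_max_left _ _) hn
      have hn2 : (r + 1) / y < (n : ℝ) := lt_of_le_of_lt (le_max_right _ _) hn
      have hns : T ≤ (n : ℝ) * s := by
        have := (div_lt_iff₀ hs).mp hn1
        linarith
      have hb1 : ‖c ((n : ℝ) * s)‖ ≤ r + 1 := by
        have h1 := hb ((n : ℝ) * s) hns
        calc ‖c ((n : ℝ) * s)‖ = ‖(c ((n : ℝ) * s) - 1) + 1‖ := by ring_nf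
          _ ≤ ‖c ((n : ℝ) * s) - 1‖ + ‖(1 : ℂ)‖ := norm_add_le _ _
          _ ≤ r + 1 := by rw [norm_one]; linarith
      have him' : ((n : ℂ) * w).im = (n : ℝ) * w.im := by
        simp [Complex.mul_im]
      have h3 : Real.sinh |((n : ℂ) * w).im| ≤ ‖Complex.cos ((n : ℂ) * w)‖ := norm_cos_ge _
      have h4 : |((n : ℂ) * w).im| = (n : ℝ) * y := by
        rw [him', abs_mul, Nat.abs_cast]
      have hny : r + 1 < (n : ℝ) * y := by
        have := (div_lt_iff₀ hy0).mp hn2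
        linarith
      have hpos : 0 < (n : ℝ) * y := by
        have : 0 ≤ r + 1 := by linarith
        linarith
      have h5 : (n : ℝ) * y < Real.sinh ((n : ℝ) * y) := Real.self_lt_sinh_iff.mpr hpos
      rw [h4] at h3
      rw [← horb n] at h3
      linarith
  rcases lt_trichotomy s 0 with h | h | h
  · obtain ⟨v, hv⟩ := key (-s) (by linarith)
    refine ⟨v, ?_⟩
    have he := ceven c hc0 hc (-s)
    rw [neg_neg] at he
    rw [he]
    exact hv
  · exact ⟨0, by rw [h, hc0]; simp⟩
  · exact key s h

/-- If `cos (n v) ≥ 1 - r` for all `n ≥ 1` with `r < 2`, then `v` is a rational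
multiple of `2π`. -/
private lemma rational_of_cos_bounded (v r : ℝ) (hr : r < 2)
    (h : ∀ n : ℕ, 1 ≤ n → 1 - r ≤ Real.cos ((n : ℝ) * v)) :
    ∃ u : ℚ, v = 2 * π * (u : ℝ) := by
  have hr0 : 0 ≤ r := by
    have h1 := h 1 le_rfl
    have h2 := Real.cos_le_one ((1 : ℕ) * v)
    linarith
  rcases (AddSubgroup.closure ({v, 2 * π} : Set ℝ)).dense_or_cyclic with hd | ⟨a, ha⟩
  · exfalso
    set δ := min 1 (2 - r) with hδ
    have hδ0 : 0 < δ := lt_min one_pos (by linarith)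
    have hδ1 : δ ≤ 1 := min_le_left _ _
    have hδ2 : δ ≤ 2 - r := min_le_right _ _
    obtain ⟨g, hgS, hg⟩ := hd.exists_between (show π - δ < π + δ by linarith)
    have habs : |g - π| < δ := abs_lt.mpr ⟨by linarith [hg.1], by linarith [hg.2]⟩
    have hcosg : Real.cos g < 1 - r := by
      have h2 : Real.cos (g - π) = -Real.cos g := Real.cos_sub_pi g
      have h3 : 1 - (g - π) ^ 2 / 2 ≤ Real.cos (g - π) := Real.one_sub_sq_div_two_le_cos
      have h4 : (g - π) ^ 2 < δ ^ 2 := by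
        have := abs_lt.mp habs
        nlinarith
      have h5 : δ ^ 2 ≤ 2 - r := by nlinarith
      nlinarith
    obtain ⟨m, k, hmk⟩ := AddSubgroup.mem_closure_pair.mp hgS
    have hg2 : Real.cos ((m : ℝ) * v) = Real.cos g := by
      rw [← hmk]
      have : (m : ℤ) • v + (k : ℤ) • (2 * π) = (m : ℝ) * v + (k : ℝ) * (2 * π) := by
        simp [zsmul_eq_mul]
      rw [this, Real.cos_add_int_mul_two_pi]
    have hm0 : m ≠ 0 := by
      rintro rfl
      rw [show ((0 : ℤ) : ℝ) * v = 0 by simp, Real.cos_zero] at hg2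
      linarith
    have hcosm : Real.cos ((m.natAbs : ℝ) * v) = Real.cos ((m : ℝ) * v) := by
      rw [Nat.cast_natAbs]
      rcases abs_cases m with ⟨hh, _⟩ | ⟨hh, _⟩
      · rw [hh]
      · rw [hh]
        push_cast
        rw [neg_mul, Real.cos_neg]
    have hge := h m.natAbs (Nat.one_le_iff_ne_zero.mpr (Int.natAbs_ne_zero.mpr hm0))
    rw [hcosm, hg2] at hge
    linarith
  · have hv : v ∈ AddSubgroup.closure ({v, 2 * π} : Set ℝ) :=
      AddSubgroup.subset_closure (by simp)
    have hpi : 2 * π ∈ AddSubgroup.closure ({v, 2 * π} : Set ℝ) :=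
      AddSubgroup.subset_closure (by simp)
    rw [ha, AddSubgroup.mem_closure_singleton] at hv hpi
    obtain ⟨p, hp⟩ := hv
    obtain ⟨q, hq⟩ := hpi
    have hq0 : (q : ℝ) ≠ 0 := by
      intro h0
      rw [zsmul_eq_mul, h0, zero_mul] at hq
      have := Real.pi_pos
      linarith
    refine ⟨(p : ℚ) / (q : ℚ), ?_⟩
    have hcast : (((p : ℚ) / (q : ℚ) : ℚ) : ℝ) = (p : ℝ) / (q : ℝ) := by push_cast; ring
    rw [hcast]
    rw [zsmul_eq_mul] at hp hq
    field_simp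
    calc v * (q : ℝ) = (p : ℝ) * ((q : ℝ) * a) := by rw [← hp]; ring
      _ = 2 * π * (p : ℝ) := by rw [hq]; ring

/-- Existence of the denominator bound. -/
private lemma exists_B (r : ℝ) (hr : r < 2) :
    ∃ B : ℕ, ∀ b : ℕ, B < b → r - 1 < Real.cos (π / (b : ℝ)) := by
  set ε := min 1 (2 - r) with hε
  have hε0 : 0 < ε := lt_min one_pos (by linarith)
  have hε1 : ε ≤ 1 := min_le_left _ _
  have hε2 : ε ≤ 2 - r := min_le_right _ _
  obtain ⟨B, hB⟩ := exists_nat_gt (π / ε)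
  refine ⟨B, fun b hb => ?_⟩
  have hb0 : 0 < (b : ℝ) := by
    have : 0 < b := by omega
    exact_mod_cast this
  have hbB : π / ε < (b : ℝ) := lt_of_lt_of_le hB (by exact_mod_cast hb.le)
  have h1 : π / (b : ℝ) < ε := by
    rw [div_lt_iff₀ hb0]
    have := (div_lt_iff₀ hε0).mp hbB
    linarith
  have h2 : 0 < π / (b : ℝ) := by positivity
  have h3 : 1 - (π / (b : ℝ)) ^ 2 / 2 ≤ Real.cos (π / (b : ℝ)) :=
    Real.one_sub_sq_div_two_le_cos
  nlinarith

/-- The denominator bound for the rational angle. -/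
private lemma den_bound (u : ℚ) (r : ℝ) (hr2 : r < 2) (N : ℕ)
    (h : ∀ n : ℕ, N ≤ n → 1 - r ≤ Real.cos ((n : ℝ) * (2 * π * (u : ℝ))))
    (B : ℕ) (hB : ∀ b : ℕ, B < b → r - 1 < Real.cos (π / (b : ℝ))) :
    u.den ≤ max B 1 := by
  set b := u.den with hbdef
  have hb0 : 0 < b := u.pos
  by_cases hb1 : b ≤ 1
  · exact le_trans hb1 (le_max_right _ _)
  push_neg at hb1
  have hb0' : (0 : ℝ) < (b : ℝ) := by exact_mod_cast hb0
  have hco : IsCoprime (u.num) ((u.den : ℤ)) := by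
    rw [Int.isCoprime_iff_gcd_eq_one]
    exact u.reduced
  obtain ⟨x, yy, hxy⟩ := hco
  -- key: every residue class gives a cosine value ≥ 1 - r
  have key : ∀ j : ℕ, 1 - r ≤ Real.cos (2 * π * ((j : ℝ) / (b : ℝ))) := by
    intro j
    set e : ℤ := x * j with he
    have hbz : ((b : ℤ)) ≠ 0 := by exact_mod_cast hb0.ne'
    set n : ℕ := (e % b).toNat + b * N with hn
    have hnN : N ≤ n := by
      have h1 : N ≤ b * N := Nat.le_mul_of_pos_left N hb0
      omega
    have hmod : (0 : ℤ) ≤ e % b := Int.emod_nonneg e hbz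
    have hcastn : (n : ℤ) = e % b + (b : ℤ) * N := by
      rw [hn]
      push_cast [Int.toNat_of_nonneg hmod]
      ring
    have hne : ((b : ℤ)) ∣ (n : ℤ) - e := by
      refine ⟨(N : ℤ) - e / b, ?_⟩
      have hdm : e % (b : ℤ) = e - (b : ℤ) * (e / b) := Int.emod_def e b
      rw [hcastn, hdm]
      ring
    have hnum : ((b : ℤ)) ∣ ((n : ℤ) * u.num - (j : ℤ)) := by
      have h1 : ((b : ℤ)) ∣ ((n : ℤ) - e) * u.num := hne.mul_right _
      have h2 : ((b : ℤ)) ∣ e * u.num - (j : ℤ) := by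
        refine ⟨-((j : ℤ) * yy), ?_⟩
        have hb' : ((b : ℤ)) = (u.den : ℤ) := by rw [hbdef]
        rw [hb', he]
        linear_combination (j : ℤ) * hxy
      have h3 : (n : ℤ) * u.num - (j : ℤ) = ((n : ℤ) - e) * u.num + (e * u.num - (j : ℤ)) := by
        ring
      rw [h3]
      exact dvd_add h1 h2
    obtain ⟨K, hK⟩ := hnum
    have hbq : ((b : ℚ)) ≠ 0 := by exact_mod_cast hb0.ne'
    have hval : ((n : ℚ)) * u = (j : ℚ) / (b : ℚ) + (K : ℚ) := by
      have hnum_eq : ((n : ℤ) : ℚ) * (u.num : ℚ) = (j : ℚ) + (b : ℚ) * (K : ℚ) := by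
        have heq : (n : ℤ) * u.num = (j : ℤ) + (b : ℤ) * K := by linarith [hK]
        exact_mod_cast congrArg (fun z : ℤ => (z : ℚ)) heq
      have hdenq : ((u.den : ℚ)) ≠ 0 := by exact_mod_cast u.pos.ne'
      have hub : u * ((u.den : ℚ)) = (u.num : ℚ) :=
        (eq_div_iff hdenq).mp (Rat.num_div_den u).symm
      have hub' : u * ((b : ℚ)) = (u.num : ℚ) := by
        rw [show ((b : ℚ)) = (u.den : ℚ) by rw [hbdef]]
        exact hub
      rw [div_add' _ _ _ hbq, eq_div_iff hbq, mul_assoc, hub']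
      push_cast at hnum_eq ⊢
      linarith [hnum_eq]
    have hcos : Real.cos ((n : ℝ) * (2 * π * (u : ℝ))) =
        Real.cos (2 * π * ((j : ℝ) / (b : ℝ))) := by
      have hvr : (n : ℝ) * (u : ℝ) = (j : ℝ) / (b : ℝ) + (K : ℝ) := by
        have hq := congrArg (fun z : ℚ => (z : ℝ)) hval
        push_cast at hq
        exact hq
      have harg : (n : ℝ) * (2 * π * (u : ℝ)) =
          2 * π * ((j : ℝ) / (b : ℝ)) + (K : ℝ) * (2 * π) := by
        linear_combination (2 * π) * hvr
      rw [harg, Real.cos_add_int_mul_two_pi]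
    rw [← hcos]
    exact h n hnN
  rcases Nat.even_or_odd b with hev | hod
  · exfalso
    obtain ⟨m, hm⟩ := hev
    have hm1 : 1 ≤ m := by omega
    have hkey := key m
    have hang : 2 * π * ((m : ℝ) / (b : ℝ)) = π := by
      rw [hm]
      have hm0 : ((m : ℝ)) ≠ 0 := by
        have : (0 : ℝ) < (m : ℝ) := by exact_mod_cast hm1
        linarith
      push_cast
      field_simp
      ring
    rw [hang, Real.cos_pi] at hkey
    linarith
  · obtain ⟨m, hm⟩ := hod
    have hm1 : 1 ≤ m := by omega
    have hkey := key m
    have hang : 2 * π * ((m : ℝ) / (b : ℝ)) = π - π / (b : ℝ) := by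
      rw [hm]
      push_cast
      have : (2 : ℝ) * (m : ℝ) + 1 ≠ 0 := by positivity
      field_simp
      ring
    rw [hang, Real.cos_pi_sub] at hkey
    by_contra hgt
    push_neg at hgt
    have hBb : B < b := lt_of_le_of_lt (le_max_left B 1) hgt
    have := hB b hBb
    linarith

/-- Main lemma: eventual bound by `r < 2` forces the family to be trivial. -/
private lemma all_one (c : ℝ → ℂ) (hc0 : c 0 = 1)
    (hc : ∀ s t : ℝ, c (t + s) + c (t - s) = 2 * (c t * c s))
    (T r : ℝ) (hr : r < 2) (hb : ∀ t : ℝ, T ≤ t → ‖c t - 1‖ ≤ r) :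
    ∀ s : ℝ, c s = 1 := by
  obtain ⟨B, hB⟩ := exists_B r hr
  have key : ∀ s : ℝ, 0 < s → c s = 1 := by
    intro s hs
    set M : ℕ := (max B 1).factorial with hMdef
    have hM0 : 0 < M := Nat.factorial_pos _
    have hM0' : (0 : ℝ) < (M : ℝ) := by exact_mod_cast hM0
    set s' := s / (M : ℝ) with hs'def
    have hs'0 : 0 < s' := by positivity
    obtain ⟨v, hv⟩ := real_valued c hc0 hc T r hb s'
    obtain ⟨N₀, hN₀⟩ := exists_nat_ge (T / s')
    set N : ℕ := N₀ + 1 with hNdef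
    have hTn : ∀ n : ℕ, N ≤ n → T ≤ (n : ℝ) * s' := by
      intro n hn
      have h1 : T / s' ≤ (n : ℝ) := by
        calc T / s' ≤ (N₀ : ℝ) := hN₀
          _ ≤ (n : ℝ) := by exact_mod_cast le_trans (Nat.le_succ _) hn
      calc T = (T / s') * s' := by field_simp
        _ ≤ (n : ℝ) * s' := by
            apply mul_le_mul_of_nonneg_right h1 hs'0.le
    have horb := orbit c hc0 hc s' (v : ℂ) hv.symm
    have hcosv : ∀ n : ℕ, N ≤ n → 1 - r ≤ Real.cos ((n : ℝ) * v) := by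
      intro n hn
      have h1 := hb ((n : ℝ) * s') (hTn n hn)
      have h2 : c ((n : ℝ) * s') = Complex.cos ((n : ℂ) * (v : ℂ)) := horb n
      have h3 : ((n : ℂ) * (v : ℂ)) = ((((n : ℝ) * v) : ℝ) : ℂ) := by push_cast; ring
      rw [h2, h3, ← Complex.ofReal_cos] at h1
      have h4 : ‖((Real.cos ((n : ℝ) * v) : ℝ) : ℂ) - 1‖ = |Real.cos ((n : ℝ) * v) - 1| := by
        rw [← Complex.ofReal_one, ← Complex.ofReal_sub, Complex.norm_real, Real.norm_eq_abs]
      rw [h4] at h1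
      have h5 := (abs_le.mp h1).1
      linarith
    have hcosv' : ∀ n : ℕ, 1 ≤ n → 1 - r ≤ Real.cos ((n : ℝ) * ((N : ℝ) * v)) := by
      intro n hn
      have h1 : N ≤ n * N := Nat.le_mul_of_pos_left N (by omega)
      have h2 := hcosv (n * N) h1
      have h3 : ((n * N : ℕ) : ℝ) * v = (n : ℝ) * ((N : ℝ) * v) := by push_cast; ring
      rwa [h3] at h2
    obtain ⟨u', hu'⟩ := rational_of_cos_bounded ((N : ℝ) * v) r hr hcosv'
    have hNQ : ((N : ℚ)) ≠ 0 := by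
      rw [hNdef]; exact_mod_cast Nat.succ_ne_zero N₀
    have hNR : ((N : ℝ)) ≠ 0 := by
      rw [hNdef]; exact_mod_cast Nat.succ_ne_zero N₀
    set u : ℚ := u' / (N : ℚ) with hudef
    have hucast : ((u : ℚ) : ℝ) = ((u' : ℝ)) / (N : ℝ) := by
      rw [hudef]; push_cast; ring
    have hv2 : v = 2 * π * (u : ℝ) := by
      rw [hucast]
      field_simp
      linear_combination hu'
    have hden : u.den ≤ max B 1 := by
      apply den_bound u r hr N _ B hB
      intro n hn
      have := hcosv n hn
      rwa [hv2] at this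
    have hdvd : u.den ∣ M := by
      rw [hMdef]
      exact Nat.dvd_factorial u.pos hden
    obtain ⟨m, hm⟩ := hdvd
    have hKex : ∃ K : ℤ, ((M : ℚ)) * u = (K : ℚ) := by
      refine ⟨(m : ℤ) * u.num, ?_⟩
      have hdenq : ((u.den : ℚ)) ≠ 0 := by exact_mod_cast u.pos.ne'
      have hMq : ((M : ℚ)) = (u.den : ℚ) * (m : ℚ) := by exact_mod_cast hm
      have hub : u * ((u.den : ℚ)) = (u.num : ℚ) :=
        (eq_div_iff hdenq).mp (Rat.num_div_den u).symm
      push_cast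
      rw [hMq]
      calc (u.den : ℚ) * (m : ℚ) * u = (m : ℚ) * (u * (u.den : ℚ)) := by ring
        _ = (m : ℚ) * (u.num : ℚ) := by rw [hub]
    obtain ⟨K, hK⟩ := hKex
    have horb2 := orbit c hc0 hc s' ((2 * π * (u : ℝ) : ℝ) : ℂ)
      (by rw [← hv2]; exact hv.symm) M
    have hsM : (M : ℝ) * s' = s := by
      rw [hs'def]; field_simp
    rw [hsM] at horb2
    have hKr : (M : ℝ) * ((u : ℚ) : ℝ) = (K : ℝ) := by
      exact_mod_cast congrArg (fun z : ℚ => (z : ℝ)) hK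
    have harg : (M : ℂ) * ((2 * π * ((u : ℚ) : ℝ) : ℝ) : ℂ) = (K : ℂ) * (2 * (π : ℂ)) := by
      have hr1 : (M : ℝ) * (2 * π * ((u : ℚ) : ℝ)) = (K : ℝ) * (2 * π) := by
        linear_combination (2 * π) * hKr
      calc (M : ℂ) * ((2 * π * ((u : ℚ) : ℝ) : ℝ) : ℂ)
          = (((M : ℝ) * (2 * π * ((u : ℚ) : ℝ)) : ℝ) : ℂ) := by push_cast; ring
        _ = (((K : ℝ) * (2 * π) : ℝ) : ℂ) := by rw [hr1]
        _ = (K : ℂ) * (2 * (π : ℂ)) := by push_cast; ring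
    rw [harg, Complex.cos_int_mul_two_pi] at horb2
    exact horb2
  intro s
  rcases lt_trichotomy s 0 with h | h | h
  · have he := ceven c hc0 hc (-s)
    rw [neg_neg] at he
    rw [he]
    exact key (-s) (by linarith)
  · rw [h]; exact hc0
  · exact key s h

/-- For a scalar cosine family `c : ℝ → ℂ`, the limit superior
`limsup_{t → ∞} |c t - 1|` (in `ℝ≥0∞`) is `0`, `2`, or `∞`; moreover if it
is `0` then `c ≡ 1`. -/
theorem scalar_cosine_limsup_infty_trichotomy (c : ℝ → ℂ)
    (hc0 : c 0 = 1)
    (hc : ∀ s t : ℝ, c (t + s) + c (t - s) = 2 * (c t * c s)) :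
    (Filter.limsup (fun t : ℝ => (‖c t - 1‖₊ : ℝ≥0∞)) Filter.atTop = 0 ∨
      Filter.limsup (fun t : ℝ => (‖c t - 1‖₊ : ℝ≥0∞)) Filter.atTop = 2 ∨
      Filter.limsup (fun t : ℝ => (‖c t - 1‖₊ : ℝ≥0∞)) Filter.atTop = ⊤) ∧
    (Filter.limsup (fun t : ℝ => (‖c t - 1‖₊ : ℝ≥0∞)) Filter.atTop = 0 →
      ∀ t : ℝ, c t = 1) := by
  set f : ℝ → ℝ≥0∞ := fun t => (‖c t - 1‖₊ : ℝ≥0∞) with hfdef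
  set L := Filter.limsup f Filter.atTop with hLdef
  have himp : L < 2 → ∀ t : ℝ, c t = 1 := by
    intro hL
    obtain ⟨q, hq0, hq1, hq2⟩ := ENNReal.lt_iff_exists_real_btwn.mp hL
    have hq2' : q < 2 := by
      have h2 : ENNReal.ofReal q < ENNReal.ofReal 2 := by
        rwa [show ENNReal.ofReal 2 = (2 : ℝ≥0∞) by norm_num]
      exact (ENNReal.ofReal_lt_ofReal_iff_of_nonneg hq0).mp h2
    have hev : ∀ᶠ t in Filter.atTop, f t < ENNReal.ofReal q :=
      Filter.eventually_lt_of_limsup_lt hq1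
    obtain ⟨T, hT⟩ := Filter.eventually_atTop.mp hev
    apply all_one c hc0 hc T q hq2'
    intro t ht
    have h1 := (hT t ht).le
    have h3 : (‖c t - 1‖₊ : ℝ≥0∞) ≤ ENNReal.ofReal q := h1
    have h4 := ENNReal.toReal_mono ENNReal.ofReal_ne_top h3
    rwa [ENNReal.coe_toReal, ENNReal.toReal_ofReal hq0, coe_nnnorm] at h4
  constructor
  · by_cases htop : L = ⊤
    · right; right; exact htop
    · by_cases h2 : L < 2
      · left
        have hall := himp h2
        have hzero : f = fun _ => (0 : ℝ≥0∞) := by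
          funext t
          simp [hfdef, hall t]
        rw [hLdef, hzero, Filter.limsup_const]
      · right; left
        push_neg at h2
        refine le_antisymm ?_ h2
        have hlt : L < L + 1 :=
          ENNReal.lt_add_right htop one_ne_zero
        have hev := Filter.eventually_lt_of_limsup_lt hlt
        obtain ⟨T, hT⟩ := Filter.eventually_atTop.mp hev
        have hne : L + 1 ≠ ⊤ := ENNReal.add_ne_top.mpr ⟨htop, ENNReal.one_ne_top⟩
        have hbd : ∀ t : ℝ, T ≤ t → ‖c t - 1‖ ≤ (L + 1).toReal := by
          intro t ht
          have h1 := (hT t ht).le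
          calc ‖c t - 1‖ = ((‖c t - 1‖₊ : ℝ≥0∞)).toReal := by
                simp [ENNReal.coe_toReal, coe_nnnorm]
            _ ≤ (L + 1).toReal := ENNReal.toReal_mono hne h1
        have hpt : ∀ t : ℝ, f t ≤ 2 := by
          intro t
          obtain ⟨v, hv⟩ := real_valued c hc0 hc T _ hbd t
          have hle : ‖c t - 1‖ ≤ 2 := by
            rw [hv, ← Complex.ofReal_cos, ← Complex.ofReal_one, ← Complex.ofReal_sub,
              Complex.norm_real, Real.norm_eq_abs]
            have hc1 := Real.neg_one_le_cos v
            have hc2 := Real.cos_le_one v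
            rw [abs_le]
            constructor <;> linarith
          have hnn : ‖c t - 1‖₊ ≤ (2 : ℝ≥0) := by
            rw [← NNReal.coe_le_coe, coe_nnnorm]
            exact_mod_cast hle
          calc f t = (‖c t - 1‖₊ : ℝ≥0∞) := rfl
            _ ≤ ((2 : ℝ≥0) : ℝ≥0∞) := ENNReal.coe_le_coe.mpr hnn
            _ = 2 := by norm_num
        calc L ≤ Filter.limsup (fun _ : ℝ => (2 : ℝ≥0∞)) Filter.atTop :=
              Filter.limsup_le_limsup (Filter.Eventually.of_forall hpt)
          _ = 2 := Filter.limsup_const _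
  · intro h0
    apply himp
    rw [h0]
    norm_num
end

section
/- Let c : ℝ → ℂ be a scalar cosine family, i.e. c(0) = 1 and c(t+s) + c(t−s) = 2·c(t)·c(s) for all s, t ∈ ℝ. Then limsup_{t→0} |c(t) − 1|, computed in the extended nonnegative reals, belongs to the set {0, 2, +∞}. Moreover, if limsup_{t→0} |c(t) − 1| = 0, then there exists a ∈ ℂ such that c(t) = cos(a·t) for all t ∈ ℝ. -/
open scoped ENNReal

open Filter Complex Topology Set
open scoped ENNReal NNReal

namespace CosAux

/-- Chebyshev-like polynomials as functions. -/
def ch : ℕ → ℂ → ℂ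
  | 0, _ => 1
  | 1, z => z
  | n+2, z => 2 * z * ch (n+1) z - ch n z

lemma ch_cos : ∀ (n : ℕ) (z : ℂ), ch n (Complex.cos z) = Complex.cos (n * z)
  | 0, z => by simp [ch]
  | 1, z => by simp [ch]
  | n+2, z => by
    have h1 := ch_cos (n+1) z
    have h2 := ch_cos n z
    have e1 : ((n:ℂ)+2) * z = ((n:ℂ)+1) * z + z := by ring
    have e2 : ((n:ℂ)+1) * z - z = (n:ℂ) * z := by ring
    simp only [ch, h1, h2]
    push_cast
    rw [e1, Complex.cos_add, ← e2, Complex.cos_sub]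
    ring

lemma ch_cont : ∀ n : ℕ, Continuous (fun z => ch n z)
  | 0 => continuous_const
  | 1 => continuous_id
  | n+2 => by
    have h1 := ch_cont (n+1)
    have h2 := ch_cont n
    show Continuous fun z => 2 * z * ch (n+1) z - ch n z
    fun_prop

lemma ch_one : ∀ n : ℕ, ch n 1 = 1 := by
  intro n
  have := ch_cos n 0
  simpa using this


lemma tendsto_mul_punct {r : ℝ} (hr : r ≠ 0) :
    Tendsto (fun t : ℝ => r * t) (𝓝[≠] (0:ℝ)) (𝓝[≠] (0:ℝ)) := by
  apply Tendsto.inf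
  · have : Tendsto (fun t : ℝ => r * t) (𝓝 0) (𝓝 (r * 0)) :=
      (continuous_const.mul continuous_id).tendsto 0
    simpa using this
  · rw [tendsto_principal_principal]
    intro t ht
    simp only [mem_compl_iff, mem_singleton_iff] at ht ⊢
    exact mul_ne_zero hr ht

lemma sinh_sq_le_norm_cos_sq (z : ℂ) : Real.sinh z.im ^ 2 ≤ ‖Complex.cos z‖^2 := by
  have h := Complex.cos_eq z
  have hthis : Complex.cos z = ((Real.cos z.re * Real.cosh z.im : ℝ) : ℂ)
      - ((Real.sin z.re * Real.sinh z.im : ℝ) : ℂ) * I := by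
    rw [h, ← Complex.ofReal_cos, ← Complex.ofReal_sin, ← Complex.ofReal_cosh,
      ← Complex.ofReal_sinh]
    push_cast
    ring
  have hre : (Complex.cos z).re = Real.cos z.re * Real.cosh z.im := by
    rw [hthis]
    simp [Complex.sub_re, Complex.mul_re, Complex.ofReal_re, Complex.ofReal_im,
      Complex.cos_ofReal_re, Complex.sin_ofReal_re, Complex.cosh_ofReal_re, Complex.sinh_ofReal_re]
  have him : (Complex.cos z).im = -(Real.sin z.re * Real.sinh z.im) := by
    rw [hthis]
    simp [Complex.sub_im, Complex.mul_im, Complex.ofReal_re, Complex.ofReal_im,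
      Complex.cos_ofReal_re, Complex.sin_ofReal_re, Complex.cosh_ofReal_re, Complex.sinh_ofReal_re]
  have hn : ‖Complex.cos z‖^2 = (Complex.cos z).re^2 + (Complex.cos z).im^2 := by
    rw [Complex.sq_norm, Complex.normSq_apply]; ring
  rw [hn, hre, him]
  have h1 := Real.sin_sq_add_cos_sq z.re
  have h2 := Real.cosh_sq z.im
  nlinarith [sq_nonneg (Real.sin z.re * Real.sinh z.im), sq_nonneg (Real.cos z.re), sq_nonneg (Real.sinh z.im)]

lemma clusterPt_pure_eq {x y : ℂ} (h : ClusterPt x (pure y)) : x = y := by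
  by_contra hne
  have hU : {z : ℂ | z ≠ y} ∈ 𝓝 x := (isOpen_ne).mem_nhds hne
  have h2 : {z : ℂ | z ≠ y} ∩ {y} = ∅ := by
    ext z; simp (config := {contextual := true}) [and_comm]
  have := h.ne
  rw [ClusterPt] at h
  have hmem : ({z : ℂ | z ≠ y} ∩ {y}) ∈ 𝓝 x ⊓ pure y :=
    inter_mem_inf hU (by simp [mem_pure])
  rw [h2] at hmem
  exact absurd (empty_mem_iff_bot.mp hmem) h.ne'

variable {c : ℝ → ℂ}

section basic
variable (hc0 : c 0 = 1) (hc : ∀ s t : ℝ, c (t + s) + c (t - s) = 2 * (c t * c s))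
include hc0 hc

lemma c_even (t : ℝ) : c (-t) = c t := by
  have h := hc t 0
  simp only [zero_add, zero_sub, hc0] at h
  linear_combination h

lemma c_double (t : ℝ) : c (2*t) = 2 * (c t)^2 - 1 := by
  have h := hc t t
  have e : t + t = 2*t := by ring
  simp only [e, sub_self, hc0] at h
  linear_combination h

lemma c_nat_mul : ∀ (n : ℕ) (t : ℝ), c ((n : ℝ) * t) = ch n (c t)
  | 0, t => by simp [ch, hc0]
  | 1, t => by simp [ch]
  | n+2, t => by
    have h1 := c_nat_mul (n+1) t
    have h2 := c_nat_mul n t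
    have h := hc t (((n:ℝ)+1) * t)
    have e1 : ((n:ℝ)+1) * t + t = ((n:ℝ)+2) * t := by ring
    have e2 : ((n:ℝ)+1) * t - t = (n:ℝ) * t := by ring
    rw [e1, e2] at h
    push_cast at h1 h2 ⊢
    simp only [ch]
    rw [← h1, ← h2]
    linear_combination h


/-- product identity: `c x * c y = (c(2u)+c(2v))/2` form, and difference-square identity. -/
lemma c_diff_sq (x y : ℝ) :
    (c x - c y)^2 = 4 * ((c ((x+y)/2))^2 - 1) * ((c ((x-y)/2))^2 - 1) := by
  have A := hc ((x-y)/2) ((x+y)/2)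
  have eA1 : (x+y)/2 + (x-y)/2 = x := by ring
  have eA2 : (x+y)/2 - (x-y)/2 = y := by ring
  rw [eA1, eA2] at A
  have B := hc y x
  have C := c_double hc0 hc ((x+y)/2)
  have D := c_double hc0 hc ((x-y)/2)
  have eC : 2*((x+y)/2) = x + y := by ring
  have eD : 2*((x-y)/2) = x - y := by ring
  rw [eC] at C; rw [eD] at D
  linear_combination (c x + c y + 2*(c ((x+y)/2) * c ((x-y)/2))) * A + 2 * B - 2 * C - 2 * D

/-- halving bound: if `‖c‖ ≤ 1 + l` at scale `δ`, then `‖c‖ ≤ 1 + l/2^n` at scale `δ/2^n`. -/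
lemma norm_halving {l δ : ℝ} (hl0 : 0 ≤ l) (hev : ∀ t : ℝ, |t| ≤ δ → ‖c t - 1‖ ≤ l) :
    ∀ (n : ℕ) (t : ℝ), |t| ≤ δ/2^n → ‖c t‖ ≤ 1 + l/2^n := by
  intro n
  induction n with
  | zero =>
    intro t ht
    simp only [pow_zero, div_one] at ht ⊢
    calc ‖c t‖ = ‖(c t - 1) + 1‖ := by ring_nf
    _ ≤ ‖c t - 1‖ + 1 := by simpa using norm_add_le (c t - 1) 1
    _ ≤ 1 + l := by have := hev t ht; linarith
  | succ n ih =>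
    intro t ht
    have h2t : |2*t| ≤ δ/2^n := by
      rw [abs_mul, (abs_two : |(2:ℝ)| = 2)]
      rw [pow_succ, show δ/(2^n*2) = (δ/2^n)/2 by ring] at ht
      linarith
    have hb := ih (2*t) h2t
    have hd := c_double hc0 hc t
    have hsq : ‖c t‖^2 ≤ 1 + l/2^(n+1) := by
      have : (c t)^2 = (c (2*t) + 1)/2 := by linear_combination -hd / 2
      have h1 : ‖(c t)^2‖ ≤ (‖c (2*t)‖ + 1)/2 := by
        rw [this]
        calc ‖(c (2*t) + 1)/2‖ = ‖c (2*t) + 1‖/2 := by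
              rw [norm_div]; norm_num
        _ ≤ (‖c (2*t)‖ + 1)/2 := by
              have := norm_add_le (c (2*t)) 1; simp only [norm_one] at this; linarith
      rw [norm_pow] at h1
      have : (‖c (2*t)‖ + 1)/2 ≤ 1 + l/2^(n+1) := by
        have e : l/2^(n+1) = (l/2^n)/2 := by rw [pow_succ]; ring
        rw [e]
        linarith
      linarith
    nlinarith [norm_nonneg (c t), sq_nonneg (‖c t‖ - (1 + l/2^(n+1))), div_nonneg hl0 (by positivity : (0:ℝ) ≤ 2^(n+1))]

/-- local boundedness from a bound near 0. -/
lemma c_locally_bounded {δ : ℝ} (hδ : 0 < δ) (hM : ∀ t : ℝ, |t| ≤ δ → ‖c t‖ ≤ 2) :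
    ∀ R : ℝ, ∃ CR : ℝ, ∀ x : ℝ, |x| ≤ R → ‖c x‖ ≤ CR := by
  set g : ℝ → ℝ := fun b => 2*b^2+1 with hg
  have key : ∀ (n : ℕ) (x : ℝ), |x| ≤ 2^n * δ → ‖c x‖ ≤ g^[n] 2 := by
    intro n
    induction n with
    | zero => intro x hx; simpa using hM x (by simpa using hx)
    | succ n ih =>
      intro x hx
      have hx2 : |x/2| ≤ 2^n * δ := by
        rw [abs_div, (abs_two : |(2:ℝ)| = 2)]
        rw [pow_succ] at hx
        nlinarith [abs_nonneg x]
      have hb := ih (x/2) hx2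
      have hd := c_double hc0 hc (x/2)
      rw [show 2*(x/2) = x by ring] at hd
      have : ‖c x‖ ≤ 2*(‖c (x/2)‖)^2 + 1 := by
        rw [hd]
        calc ‖2*(c (x/2))^2 - 1‖ ≤ ‖2*(c (x/2))^2‖ + 1 := by
              have := norm_sub_le (2*(c (x/2))^2) 1; simpa using this
        _ = 2*(‖c (x/2)‖)^2 + 1 := by simp [norm_mul, norm_pow]
      rw [Function.iterate_succ_apply']
      have hgb : g (g^[n] 2) = 2*(g^[n] 2)^2 + 1 := rfl
      rw [hgb]
      nlinarith [norm_nonneg (c (x/2))]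
  intro R
  obtain ⟨n, hn⟩ : ∃ n : ℕ, R/δ < 2^n := pow_unbounded_of_one_lt (R/δ) one_lt_two
  refine ⟨g^[n] 2, fun x hx => key n x ?_⟩
  have : R < 2^n * δ := by
    rw [div_lt_iff₀ hδ] at hn; linarith
  linarith

end basic
end CosAux

namespace Big
open CosAux

variable {c : ℝ → ℂ}

lemma abs_le_abs_sinh (u : ℝ) : |u| ≤ |Real.sinh u| := by
  rcases le_or_gt 0 u with h | h
  · rw [_root_.abs_of_nonneg h, _root_.abs_of_nonneg (Real.sinh_nonneg_iff.mpr h)]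
    exact Real.self_le_sinh_iff.mpr h
  · rw [_root_.abs_of_neg h, _root_.abs_of_neg (Real.sinh_neg_iff.mpr h)]
    have := Real.self_le_sinh_iff.mpr (neg_nonneg.mpr h.le)
    rw [Real.sinh_neg] at this
    linarith

lemma cluster_nhds_zero (hc0 : c 0 = 1) {x : ℂ} (h : MapClusterPt x (𝓝 (0:ℝ)) c) :
    MapClusterPt x (𝓝[≠] (0:ℝ)) c ∨ x = 1 := by
  have hsup : (𝓝 (0:ℝ)) = 𝓝[≠] (0:ℝ) ⊔ pure 0 := (nhdsNE_sup_pure 0).symm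
  have h' : ClusterPt x (map c (𝓝[≠] (0:ℝ)) ⊔ map c (pure 0)) := by
    rw [← Filter.map_sup, ← hsup]; exact h
  rw [Filter.map_pure, hc0] at h'
  rw [ClusterPt, inf_sup_left] at h'
  rcases sup_neBot.mp h' with h1 | h2
  · exact Or.inl h1
  · exact Or.inr (clusterPt_pure_eq h2)

theorem tendsto_one_of_small (hc0 : c 0 = 1)
    (hc : ∀ s t : ℝ, c (t + s) + c (t - s) = 2 * (c t * c s))
    {l δ : ℝ} (hl0 : 0 ≤ l) (hl2 : l < 2) (hδ : 0 < δ)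
    (hev : ∀ t : ℝ, |t| ≤ δ → ‖c t - 1‖ ≤ l) :
    Tendsto c (𝓝[≠] (0:ℝ)) (𝓝 1) := by
  set F : Filter ℝ := 𝓝[≠] (0:ℝ) with hF
  haveI hFne : F.NeBot := by rw [hF]; infer_instance
  set K : Set ℂ := Metric.closedBall 1 l with hK
  have hKcpt : IsCompact K := isCompact_closedBall 1 l
  have hKcl : IsClosed K := Metric.isClosed_closedBall
  have h1K : (1:ℂ) ∈ K := Metric.mem_closedBall_self hl0
  have hmem : ∀ t : ℝ, |t| ≤ δ → c t ∈ K := fun t ht => by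
    simp only [hK, Metric.mem_closedBall, dist_eq_norm]; exact hev t ht
  have hsmall : ∀ r : ℝ, 0 < r → ∀ᶠ t in 𝓝 (0:ℝ), |t| ≤ r := by
    intro r hr
    filter_upwards [Metric.closedBall_mem_nhds (0:ℝ) hr] with t ht
    simpa [Real.dist_eq] using ht
  have hevK : ∀ᶠ t in 𝓝 (0:ℝ), c t ∈ K := (hsmall δ hδ).mono (fun t ht => hmem t ht)
  have hevKF : ∀ᶠ t in F, c t ∈ K := hevK.filter_mono nhdsWithin_le_nhds
  set E : Set ℂ := {p | MapClusterPt p F c} with hE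
  have hclosure : ∀ (p : ℂ), MapClusterPt p F c → ∀ (s : Set ℂ), IsClosed s →
      (∀ᶠ t in F, c t ∈ s) → p ∈ s := by
    intro p hp s hs hev'
    have hmem' : s ∈ map c F := hev'
    have : p ∈ closure s := (clusterPt_iff_forall_mem_closure.mp hp) s hmem'
    rwa [hs.closure_eq] at this
  have hEK : ∀ p ∈ E, p ∈ K := fun p hp => hclosure p hp K hKcl hevKF
  have hEnorm : ∀ p ∈ E, ‖p‖ ≤ 1 := by
    intro p hp
    have hn : ∀ n : ℕ, ‖p‖ ≤ 1 + l/2^n := by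
      intro n
      have hevn : ∀ᶠ t in F, c t ∈ Metric.closedBall (0:ℂ) (1 + l/2^n) :=
        ((hsmall (δ/2^n) (by positivity)).mono (fun t ht => by
          simpa [Metric.mem_closedBall, dist_eq_norm, sub_zero] using
            norm_halving hc0 hc hl0 hev n t ht)).filter_mono nhdsWithin_le_nhds
      have := hclosure p hp _ Metric.isClosed_closedBall hevn
      simpa [Metric.mem_closedBall, dist_eq_norm, sub_zero] using this
    have hlim : Tendsto (fun n : ℕ => 1 + l/2^n) atTop (𝓝 1) := by
      have h2 : Tendsto (fun n : ℕ => (1/2:ℝ)^n) atTop (𝓝 0) :=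
        tendsto_pow_atTop_nhds_zero_of_lt_one (by norm_num) (by norm_num)
      have h3 : Tendsto (fun n : ℕ => l * (1/2:ℝ)^n) atTop (𝓝 (l * 0)) := h2.const_mul l
      have h4 : Tendsto (fun n : ℕ => 1 + l * (1/2:ℝ)^n) atTop (𝓝 (1 + l * 0)) :=
        tendsto_const_nhds.add h3
      simpa [div_eq_mul_inv, inv_pow] using h4
    exact ge_of_tendsto hlim (Eventually.of_forall hn)
  -- E is closed under `ch N`
  have hEch : ∀ (N : ℕ), 1 ≤ N → ∀ p ∈ E, ch N p ∈ E := by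
    intro N hN p hp
    have hNne : ((N:ℝ)) ≠ 0 := Nat.cast_ne_zero.mpr (by omega)
    have h1 : MapClusterPt (ch N p) F (ch N ∘ c) :=
      MapClusterPt.continuousAt_comp ((ch_cont N).continuousAt) hp
    have heq : (ch N ∘ c) = c ∘ (fun t : ℝ => (N:ℝ)*t) := by
      funext t
      simp only [Function.comp_apply]
      exact (c_nat_mul hc0 hc N t).symm
    rw [heq] at h1
    exact MapClusterPt.of_comp (tendsto_mul_punct hNne) h1
  -- E admits `ch N`-preimages
  have hEdiv : ∀ (N : ℕ), 1 ≤ N → ∀ p ∈ E, ∃ u ∈ E, ch N u = p := by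
    intro N hN p hp
    have hNne : ((N:ℝ)) ≠ 0 := Nat.cast_ne_zero.mpr (by omega)
    set G1 : Filter ℝ := F ⊓ comap c (𝓝 p) with hG1
    haveI hG1ne : G1.NeBot := by
      have hpp : map c (F ⊓ comap c (𝓝 p)) = map c F ⊓ 𝓝 p := Filter.push_pull c F (𝓝 p)
      have hnb : NeBot (map c F ⊓ 𝓝 p) := by
        have := hp.clusterPt
        rwa [ClusterPt, inf_comm] at this
      rw [← hpp] at hnb
      exact (Filter.map_neBot_iff c).mp hnb
    have hG1F : G1 ≤ F := inf_le_left
    have hmapp : Tendsto c G1 (𝓝 p) := tendsto_comap.mono_left inf_le_right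
    set φ : ℝ → ℝ := fun t => ((N:ℝ))⁻¹ * t with hφ
    have hφF : Tendsto φ G1 F :=
      (tendsto_mul_punct (inv_ne_zero hNne)).mono_left hG1F
    have hevφ : ∀ᶠ t in G1, c (φ t) ∈ K := hφF.eventually hevKF
    obtain ⟨u, huK, hu⟩ := hKcpt.exists_mapClusterPt (f := G1) (u := fun t => c (φ t))
      (le_principal_iff.mpr hevφ)
    refine ⟨u, MapClusterPt.of_comp hφF hu, ?_⟩
    have h1 : MapClusterPt (ch N u) G1 (ch N ∘ (fun t => c (φ t))) :=
      MapClusterPt.continuousAt_comp ((ch_cont N).continuousAt) hu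
    have heq : (ch N ∘ (fun t => c (φ t))) = c := by
      funext t
      simp only [Function.comp_apply]
      rw [← c_nat_mul hc0 hc N (φ t)]
      congr 1
      simp only [hφ]
      field_simp
    rw [heq] at h1
    have hb : NeBot (𝓝 (ch N u) ⊓ 𝓝 p) :=
      (h1.clusterPt).neBot.mono (inf_le_inf_left _ hmapp)
    exact eq_of_nhds_neBot hb
  -- sum/difference closure
  have hEadd : ∀ p ∈ E, ∀ q ∈ E, ∃ x y : ℂ, (x ∈ E ∨ x = 1) ∧ (y ∈ E ∨ y = 1) ∧
      x + y = 2*(p*q) ∧ x*y = p^2+q^2-1 := by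
    intro p hp q hq
    set Fp : Filter (ℝ×ℝ) := F ×ˢ F with hFp
    haveI hFpne : Fp.NeBot := prod_neBot.mpr ⟨hFne, hFne⟩
    have hpair : ClusterPt (p, q) (map ((fun ts : ℝ×ℝ => (c ts.1, c ts.2))) Fp) := by
      rw [hFp, ← prod_map_map_eq, ClusterPt, nhds_prod_eq, prod_inf_prod]
      exact prod_neBot.mpr ⟨(hp.clusterPt).neBot, (hq.clusterPt).neBot⟩
    set H : Filter (ℝ×ℝ) := Fp ⊓ comap ((fun ts : ℝ×ℝ => (c ts.1, c ts.2))) (𝓝 (p,q)) with hH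
    haveI hHne : H.NeBot := by
      have hpp := Filter.push_pull ((fun ts : ℝ×ℝ => (c ts.1, c ts.2))) Fp (𝓝 (p,q))
      have hnb : NeBot (map ((fun ts : ℝ×ℝ => (c ts.1, c ts.2))) Fp ⊓ 𝓝 (p,q)) := by
        have := hpair.neBot; rwa [inf_comm] at this
      rw [← hpp] at hnb
      exact (Filter.map_neBot_iff _).mp hnb
    have hHF : H ≤ Fp := inf_le_left
    have hccH : Tendsto ((fun ts : ℝ×ℝ => (c ts.1, c ts.2))) H (𝓝 (p,q)) := tendsto_comap.mono_left inf_le_right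
    have hc1 : Tendsto (fun ts : ℝ×ℝ => c ts.1) H (𝓝 p) := by
      have h' : Tendsto (Prod.fst ∘ (fun ts : ℝ×ℝ => (c ts.1, c ts.2))) H (𝓝 (p,q).1) :=
        Tendsto.comp continuousAt_fst hccH
      exact h'
    have hc2 : Tendsto (fun ts : ℝ×ℝ => c ts.2) H (𝓝 q) := by
      have h' : Tendsto (Prod.snd ∘ (fun ts : ℝ×ℝ => (c ts.1, c ts.2))) H (𝓝 (p,q).2) :=
        Tendsto.comp continuousAt_snd hccH
      exact h'
    have hevhalf : ∀ᶠ t in F, |t| ≤ δ/2 :=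
      (hsmall (δ/2) (by positivity)).filter_mono nhdsWithin_le_nhds
    have hev2 : ∀ᶠ ts : ℝ×ℝ in Fp, |ts.1| ≤ δ/2 ∧ |ts.2| ≤ δ/2 :=
      Eventually.prod_mk hevhalf hevhalf
    have hevf1 : ∀ᶠ ts : ℝ×ℝ in H, c (ts.1 + ts.2) ∈ K := by
      filter_upwards [hHF hev2] with ts hts
      exact hmem _ (le_trans (abs_add_le _ _) (by linarith [hts.1, hts.2]))
    have hevf2 : ∀ᶠ ts : ℝ×ℝ in H, c (ts.1 - ts.2) ∈ K := by
      filter_upwards [hHF hev2] with ts hts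
      exact hmem _ (le_trans (abs_sub _ _) (by linarith [hts.1, hts.2]))
    obtain ⟨x, hxK, hx⟩ := hKcpt.exists_mapClusterPt (f := H)
      (u := fun ts : ℝ×ℝ => c (ts.1+ts.2)) (le_principal_iff.mpr hevf1)
    set H' : Filter (ℝ×ℝ) := H ⊓ comap (fun ts : ℝ×ℝ => c (ts.1+ts.2)) (𝓝 x) with hH'
    haveI hH'ne : H'.NeBot := by
      have hpp := Filter.push_pull (fun ts : ℝ×ℝ => c (ts.1+ts.2)) H (𝓝 x)
      have hnb : NeBot (map (fun ts : ℝ×ℝ => c (ts.1+ts.2)) H ⊓ 𝓝 x) := by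
        have := hx.clusterPt.neBot; rwa [inf_comm] at this
      rw [← hpp] at hnb
      exact (Filter.map_neBot_iff _).mp hnb
    obtain ⟨y, hyK, hy⟩ := hKcpt.exists_mapClusterPt (f := H')
      (u := fun ts : ℝ×ℝ => c (ts.1-ts.2))
      (le_principal_iff.mpr (hevf2.filter_mono inf_le_left))
    set H2 : Filter (ℝ×ℝ) := H' ⊓ comap (fun ts : ℝ×ℝ => c (ts.1-ts.2)) (𝓝 y) with hH2
    haveI hH2ne : H2.NeBot := by
      have hpp := Filter.push_pull (fun ts : ℝ×ℝ => c (ts.1-ts.2)) H' (𝓝 y)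
      have hnb : NeBot (map (fun ts : ℝ×ℝ => c (ts.1-ts.2)) H' ⊓ 𝓝 y) := by
        have := hy.clusterPt.neBot; rwa [inf_comm] at this
      rw [← hpp] at hnb
      exact (Filter.map_neBot_iff _).mp hnb
    have hH2H : H2 ≤ H := le_trans inf_le_left inf_le_left
    have t1 : Tendsto (fun ts : ℝ×ℝ => c (ts.1+ts.2)) H2 (𝓝 x) :=
      tendsto_comap.mono_left (le_trans inf_le_left inf_le_right)
    have t2 : Tendsto (fun ts : ℝ×ℝ => c (ts.1-ts.2)) H2 (𝓝 y) :=
      tendsto_comap.mono_left inf_le_right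
    have t3 : Tendsto (fun ts : ℝ×ℝ => c ts.1) H2 (𝓝 p) := hc1.mono_left hH2H
    have t4 : Tendsto (fun ts : ℝ×ℝ => c ts.2) H2 (𝓝 q) := hc2.mono_left hH2H
    have e1 : x + y = 2*(p*q) := by
      refine tendsto_nhds_unique (t1.add t2) ?_
      have heq : (fun ts : ℝ×ℝ => c (ts.1+ts.2) + c (ts.1-ts.2))
          = fun ts : ℝ×ℝ => 2*(c ts.1 * c ts.2) := funext fun ts => hc ts.2 ts.1
      rw [heq]
      exact (t3.mul t4).const_mul 2
    have e2 : x * y = p^2+q^2-1 := by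
      refine tendsto_nhds_unique (t1.mul t2) ?_
      have heq : (fun ts : ℝ×ℝ => c (ts.1+ts.2) * c (ts.1-ts.2))
          = fun ts : ℝ×ℝ => (c ts.1)^2 + (c ts.2)^2 - 1 := by
        funext ts
        have h := hc (ts.1 - ts.2) (ts.1 + ts.2)
        rw [show ts.1+ts.2+(ts.1-ts.2) = 2*ts.1 by ring,
            show ts.1+ts.2-(ts.1-ts.2) = 2*ts.2 by ring] at h
        have d1 := c_double hc0 hc ts.1
        have d2 := c_double hc0 hc ts.2
        linear_combination (d1 + d2 - h)/2
      rw [heq]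
      exact ((t3.pow 2).add (t4.pow 2)).sub tendsto_const_nhds
    have memkey : ∀ (z : ℂ) (g : ℝ×ℝ → ℝ), Tendsto g Fp (𝓝 0) →
        Tendsto (fun ts => c (g ts)) H2 (𝓝 z) → (z ∈ E ∨ z = 1) := by
      intro z g hg ht
      have h1 : MapClusterPt z H2 (c ∘ g) := ht.mapClusterPt
      have h2 : MapClusterPt z (𝓝 (0:ℝ)) c :=
        MapClusterPt.of_comp (hg.mono_left (le_trans hH2H hHF)) h1
      exact cluster_nhds_zero hc0 h2
    have hgadd : Tendsto (fun ts : ℝ×ℝ => ts.1 + ts.2) Fp (𝓝 0) := by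
      have h0 : Tendsto (fun ts : ℝ×ℝ => ts.1 + ts.2) (𝓝 (0:ℝ) ×ˢ 𝓝 (0:ℝ)) (𝓝 (0+0)) := by
        rw [← nhds_prod_eq]
        exact (continuous_fst.add continuous_snd).tendsto ((0:ℝ),(0:ℝ))
      have hle : Fp ≤ 𝓝 (0:ℝ) ×ˢ 𝓝 (0:ℝ) :=
        Filter.prod_mono nhdsWithin_le_nhds nhdsWithin_le_nhds
      simpa using h0.mono_left hle
    have hgsub : Tendsto (fun ts : ℝ×ℝ => ts.1 - ts.2) Fp (𝓝 0) := by
      have h0 : Tendsto (fun ts : ℝ×ℝ => ts.1 - ts.2) (𝓝 (0:ℝ) ×ˢ 𝓝 (0:ℝ)) (𝓝 (0-0)) := by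
        rw [← nhds_prod_eq]
        exact (continuous_fst.sub continuous_snd).tendsto ((0:ℝ),(0:ℝ))
      have hle : Fp ≤ 𝓝 (0:ℝ) ×ˢ 𝓝 (0:ℝ) :=
        Filter.prod_mono nhdsWithin_le_nhds nhdsWithin_le_nhds
      simpa using h0.mono_left hle
    exact ⟨x, y, memkey x _ hgadd t1, memkey y _ hgsub t2, e1, e2⟩
  -- every cluster point is a real cosine value
  have hEreal : ∀ p ∈ E, ∃ θ : ℝ, p = ((Real.cos θ : ℝ) : ℂ) := by
    intro p hp
    obtain ⟨ζ, hζ⟩ := Complex.cos_surjective p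
    by_cases him : ζ.im = 0
    · refine ⟨ζ.re, ?_⟩
      rw [← hζ, Complex.ofReal_cos]
      congr 1
      exact (Complex.ext (by simp) (by simp [him])).symm
    · exfalso
      set N : ℕ := ⌈2/|ζ.im|⌉₊ with hN
      have himpos : 0 < |ζ.im| := abs_pos.mpr him
      have hN1 : 1 ≤ N := Nat.one_le_ceil_iff.mpr (by positivity)
      have hNim : 2 ≤ (N:ℝ) * |ζ.im| := by
        have := Nat.le_ceil (2/|ζ.im|)
        rw [div_le_iff₀ himpos] at this
        calc (2:ℝ) ≤ (⌈2/|ζ.im|⌉₊ : ℝ) * |ζ.im| := this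
        _ = (N:ℝ) * |ζ.im| := by rw [hN]
      have hch := hEch N hN1 p hp
      have hb : ‖ch N p‖ ≤ 1 := hEnorm _ hch
      rw [← hζ, ch_cos] at hb
      have hsinh := sinh_sq_le_norm_cos_sq ((N:ℂ)*ζ)
      have him' : ((N:ℂ)*ζ).im = (N:ℝ) * ζ.im := by simp
      rw [him'] at hsinh
      have h2 : (2:ℝ) ≤ |Real.sinh ((N:ℝ) * ζ.im)| := by
        have := abs_le_abs_sinh ((N:ℝ) * ζ.im)
        rw [abs_mul, Nat.abs_cast] at this
        linarith
      have h3 : ‖Complex.cos ((N:ℂ)*ζ)‖ ≤ 1 := hb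
      nlinarith [abs_nonneg (Real.sinh ((N:ℝ) * ζ.im)), _root_.sq_abs (Real.sinh ((N:ℝ) * ζ.im)),
        norm_nonneg (Complex.cos ((N:ℂ)*ζ))]
  -- the angle set is an additive subgroup
  set Gs : Set ℝ := {θ : ℝ | ((Real.cos θ : ℝ) : ℂ) ∈ E ∨ ((Real.cos θ : ℝ) : ℂ) = 1} with hGs
  have hGzero : (0:ℝ) ∈ Gs := by right; simp
  have hGneg : ∀ θ ∈ Gs, -θ ∈ Gs := by
    intro θ h
    show ((Real.cos (-θ) : ℝ) : ℂ) ∈ E ∨ ((Real.cos (-θ) : ℝ) : ℂ) = 1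
    rw [Real.cos_neg]
    exact h
  have hsin1 : ∀ x : ℝ, ((Real.cos x:ℝ):ℂ) = 1 → Real.sin x = 0 ∧ Real.cos x = 1 := by
    intro x hx
    have hcx : Real.cos x = 1 := by exact_mod_cast hx
    have hs2 : Real.sin x ^ 2 = 0 := by nlinarith [Real.sin_sq_add_cos_sq x]
    exact ⟨(pow_eq_zero_iff two_ne_zero).mp hs2, hcx⟩
  have hGadd : ∀ θ ∈ Gs, ∀ ψ ∈ Gs, θ + ψ ∈ Gs := by
    intro a ha b hb
    rcases hb with hbE | hb1
    rotate_left
    · obtain ⟨hsb, hcb⟩ := hsin1 b hb1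
      have : Real.cos (a+b) = Real.cos a := by rw [Real.cos_add, hsb, hcb]; ring
      show ((Real.cos (a+b):ℝ):ℂ) ∈ E ∨ _
      rw [this]; exact ha
    rcases ha with haE | ha1
    rotate_left
    · obtain ⟨hsa, hca⟩ := hsin1 a ha1
      have : Real.cos (a+b) = Real.cos b := by rw [Real.cos_add, hsa, hca]; ring
      show ((Real.cos (a+b):ℝ):ℂ) ∈ E ∨ _
      rw [this]; exact Or.inl hbE
    · obtain ⟨x, y, hxE, hyE, hsum, hprod⟩ := hEadd _ haE _ hbE
      have hquad : (((Real.cos (a+b):ℝ):ℂ))^2 - (x+y)*((Real.cos (a+b):ℝ):ℂ) + x*y = 0 := by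
        have hq : Real.cos (a+b)^2 - 2*(Real.cos a*Real.cos b)*Real.cos (a+b)
            + (Real.cos a^2 + Real.cos b^2 - 1) = 0 := by
          have ea := Real.sin_sq_add_cos_sq a
          have eb := Real.sin_sq_add_cos_sq b
          rw [Real.cos_add]
          nlinarith [ea, eb]
        have hc' : ((Real.cos (a+b):ℝ):ℂ)^2
            - 2*(((Real.cos a:ℝ):ℂ)*((Real.cos b:ℝ):ℂ))*((Real.cos (a+b):ℝ):ℂ)
            + (((Real.cos a:ℝ):ℂ)^2 + ((Real.cos b:ℝ):ℂ)^2 - 1) = 0 := by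
          exact_mod_cast congrArg (fun r : ℝ => (r : ℂ)) hq
        rw [hsum, hprod]
        linear_combination hc'
      have hroot : (((Real.cos (a+b):ℝ):ℂ) - x) * (((Real.cos (a+b):ℝ):ℂ) - y) = 0 := by
        linear_combination hquad
      rcases mul_eq_zero.mp hroot with h | h
      · have hx' : ((Real.cos (a+b):ℝ):ℂ) = x := sub_eq_zero.mp h
        show _ ∨ _
        rw [hx']; exact hxE
      · have hy' : ((Real.cos (a+b):ℝ):ℂ) = y := sub_eq_zero.mp h
        show _ ∨ _
        rw [hy']; exact hyE
  set G : AddSubgroup ℝ :=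
    { carrier := Gs
      zero_mem' := hGzero
      add_mem' := fun {a} {b} ha hb => hGadd a ha b hb
      neg_mem' := fun {a} ha => hGneg a ha } with hG
  rcases AddSubgroup.dense_or_cyclic G with hdense | ⟨g, hcyc⟩
  · exfalso
    have hπ : Real.pi ∈ closure (Gs) := by
      have : closure ((G : Set ℝ)) = Set.univ := hdense.closure_eq
      have : Real.pi ∈ closure ((G : Set ℝ)) := by rw [this]; trivial
      exact this
    have hcont : Continuous (fun θ : ℝ => ((Real.cos θ:ℝ):ℂ)) :=
      Complex.continuous_ofReal.comp Real.continuous_cos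
    have himg : ((Real.cos Real.pi:ℝ):ℂ) ∈ closure ((fun θ : ℝ => ((Real.cos θ:ℝ):ℂ)) '' Gs) :=
      mem_closure_image hcont.continuousAt hπ
    have hsub : (fun θ : ℝ => ((Real.cos θ:ℝ):ℂ)) '' Gs ⊆ K := by
      rintro _ ⟨θ, hθ, rfl⟩
      show ((Real.cos θ:ℝ):ℂ) ∈ K
      rcases hθ with h | h
      · exact hEK _ h
      · rw [h]; exact h1K
    have hval : ((Real.cos Real.pi:ℝ):ℂ) ∈ K := by
      have := closure_mono hsub himg
      rwa [hKcl.closure_eq] at this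
    rw [Real.cos_pi] at hval
    have : ‖((-1:ℝ):ℂ) - 1‖ ≤ l := by
      simpa [hK, Metric.mem_closedBall, dist_eq_norm] using hval
    have h2 : ‖((-1:ℝ):ℂ) - 1‖ = 2 := by
      have hval2 : ((-1:ℝ):ℂ) - 1 = -2 := by push_cast; ring
      rw [hval2]
      simp
    rw [h2] at this
    linarith
  · -- cyclic case: E ⊆ {1}
    have h2π : (2*Real.pi) ∈ G := by
      show (2*Real.pi) ∈ Gs
      right
      norm_cast
      exact Real.cos_two_pi
    rw [hcyc] at h2π
    obtain ⟨m, hm⟩ := AddSubgroup.mem_closure_singleton.mp h2π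
    rw [zsmul_eq_mul] at hm
    have hm0 : m ≠ 0 := by
      rintro rfl
      simp at hm
    have hE1 : ∀ p ∈ E, p = 1 := by
      intro p hp
      set N : ℕ := m.natAbs with hNdef
      have hN : 1 ≤ N := by
        have := Int.natAbs_pos.mpr hm0
        omega
      obtain ⟨u, huE, huch⟩ := hEdiv N hN p hp
      obtain ⟨ψ, hψ⟩ := hEreal u huE
      have hψG : ψ ∈ AddSubgroup.closure {g} := by
        rw [← hcyc]
        show ψ ∈ Gs
        left
        rw [← hψ]; exact huE
      obtain ⟨j, hj⟩ := AddSubgroup.mem_closure_singleton.mp hψG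
      rw [zsmul_eq_mul] at hj
      have hchval : ch N u = ((Real.cos ((N:ℝ)*ψ) : ℝ) : ℂ) := by
        rw [hψ, Complex.ofReal_cos, ch_cos, Complex.ofReal_cos]
        congr 1
        push_cast
        ring
      have hcosNψ : Real.cos ((N:ℝ)*ψ) = 1 := by
        rcases Int.natAbs_eq m with he | he
        · have hNm : ((N:ℝ)) = (m:ℝ) := by
            have h'' : (((N:ℤ)) : ℝ) = ((m:ℤ) : ℝ) := congrArg _ he.symm
            simpa using h''
          have harg : (N:ℝ)*ψ = (j:ℝ) * (2*Real.pi) := by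
            rw [← hj, hNm]
            rw [← hm]
            ring
          rw [harg]
          exact Real.cos_int_mul_two_pi j
        · have hNm : ((N:ℝ)) = -(m:ℝ) := by
            have h'' : ((m:ℤ) : ℝ) = (((-(N:ℤ)):ℤ) : ℝ) := congrArg _ he
            push_cast at h''
            linarith
          have harg : (N:ℝ)*ψ = ((-j):ℤ) * (2*Real.pi) := by
            push_cast
            rw [← hj, hNm, ← hm]
            ring
          rw [harg]
          exact Real.cos_int_mul_two_pi (-j)
      rw [← huch, hchval, hcosNψ]
      norm_num
    -- conclude: c tends to 1
    rw [Metric.tendsto_nhds]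
    by_contra hcon
    push_neg at hcon
    obtain ⟨ε, hε, hfreq⟩ := hcon
    have hfreq : ∃ᶠ t in F, ¬ dist (c t) 1 < ε := hfreq.mono fun t ht => not_lt.mpr ht
    set F' : Filter ℝ := F ⊓ 𝓟 {t | ¬ dist (c t) 1 < ε} with hF'
    haveI hF'ne : F'.NeBot := Filter.frequently_iff_neBot.mp hfreq
    have hevK' : ∀ᶠ t in F', c t ∈ K := hevKF.filter_mono inf_le_left
    have hevC : ∀ᶠ t in F', ε ≤ dist (c t) 1 := by
      have hmem' : {t : ℝ | ¬ dist (c t) 1 < ε} ∈ F' :=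
        mem_inf_of_right (mem_principal_self _)
      filter_upwards [hmem'] with t ht
      exact not_lt.mp ht
    have hC : IsClosed {z : ℂ | ε ≤ dist z 1} :=
      isClosed_le continuous_const (continuous_id.dist continuous_const)
    have hKC : IsCompact (K ∩ {z : ℂ | ε ≤ dist z 1}) := hKcpt.inter_right hC
    have hevKC : ∀ᶠ t in F', c t ∈ K ∩ {z : ℂ | ε ≤ dist z 1} := by
      filter_upwards [hevK', hevC] with t h1 h2
      exact ⟨h1, h2⟩
    obtain ⟨p, hpmem, hp⟩ := hKC.exists_mapClusterPt (f := F') (u := c)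
      (le_principal_iff.mpr hevKC)
    have hpE : p ∈ E := hp.mono inf_le_left
    have hp1 : p = 1 := hE1 p hpE
    rw [hp1] at hpmem
    have : ε ≤ dist (1:ℂ) 1 := hpmem.2
    simp at this
    linarith

end Big

section Part2
open CosAux Big

variable {c : ℝ → ℂ}

lemma exists_small_arccos {w : ℂ} (hw : ‖w - 1‖ ≤ 1/500) :
    ∃ z : ℂ, ‖z‖ ≤ 1/2 ∧ Complex.cos z = w := by
  by_cases hsq : w^2 - 1 = 0
  · have hw1 : w = 1 ∨ w = -1 := by
      have h : (w-1)*(w+1) = 0 := by linear_combination hsq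
      rcases mul_eq_zero.mp h with h'|h'
      · exact Or.inl (by linear_combination h')
      · exact Or.inr (by linear_combination h')
    rcases hw1 with rfl|rfl
    · exact ⟨0, by norm_num, by simp⟩
    · exfalso
      rw [show (-1:ℂ) - 1 = -2 by ring] at hw
      simp at hw
      norm_num at hw
  · set s : ℂ := (w^2 - 1) ^ ((1:ℂ)/2) with hs
    have hs2 : s^2 = w^2 - 1 := by
      have h := (Complex.cpow_add ((1:ℂ)/2) ((1:ℂ)/2) hsq).symm
      rw [show (1:ℂ)/2 + 1/2 = 1 by norm_num, Complex.cpow_one] at h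
      rw [hs, sq]
      exact h
    have hwnorm : ‖w‖ ≤ 1 + 1/500 := by
      have h := norm_add_le (w - 1) 1
      rw [show w - 1 + 1 = w by ring] at h
      simp only [norm_one] at h
      linarith
    have hsnorm : ‖s‖ ≤ 1/10 := by
      have h1 : ‖s‖^2 = ‖w^2-1‖ := by rw [← norm_pow, hs2]
      have h2 : ‖w^2 - 1‖ ≤ 3/500 := by
        rw [show w^2 - 1 = (w-1)*(w+1) by ring, norm_mul]
        have h3 : ‖w+1‖ ≤ ‖w-1‖ + 2 := by
          have h4 := norm_add_le (w-1) 2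
          rw [show w-1+2 = w+1 by ring] at h4
          simpa using h4
        nlinarith [norm_nonneg (w-1), norm_nonneg (w+1)]
      nlinarith [norm_nonneg s]
    set q : ℂ := w + s with hqdef
    have hq1 : ‖q - 1‖ ≤ 1/9 := by
      rw [hqdef, show w + s - 1 = (w-1) + s by ring]
      calc ‖(w-1)+s‖ ≤ ‖w-1‖ + ‖s‖ := norm_add_le _ _
      _ ≤ 1/500 + 1/10 := add_le_add hw hsnorm
      _ ≤ 1/9 := by norm_num
    have hqre : 8/9 ≤ q.re := by
      have h1 : |(q-1).re| ≤ ‖q - 1‖ := by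
        exact Complex.abs_re_le_norm (q-1)
      have h2 : (q-1).re = q.re - 1 := by simp
      rw [h2] at h1
      have := abs_le.mp (le_trans h1 hq1)
      linarith [this.1]
    have hqim : |q.im| ≤ 1/9 := by
      have h1 : |(q-1).im| ≤ ‖q - 1‖ := by
        exact Complex.abs_im_le_norm (q-1)
      have h2 : (q-1).im = q.im := by simp
      rw [h2] at h1
      linarith
    have hqnorm_ub : ‖q‖ ≤ 10/9 := by
      have h := norm_add_le (q-1) 1
      rw [show q-1+1 = q by ring] at h
      simp only [norm_one] at h
      linarith
    have hqnorm_lb : 8/9 ≤ ‖q‖ := by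
      have := Complex.re_le_norm q
      linarith
    have hq0 : q ≠ 0 := by
      intro h
      rw [h] at hqre
      simp at hqre
      linarith
    have hqquad : q^2 - 2*w*q + 1 = 0 := by
      rw [hqdef]
      linear_combination hs2
    refine ⟨-Complex.I * Complex.log q, ?_, ?_⟩
    · -- norm bound
      have hnorm_eq : ‖-Complex.I * Complex.log q‖ = ‖Complex.log q‖ := by
        rw [norm_mul]
        simp
      rw [hnorm_eq]
      have hlogre : (Complex.log q).re = Real.log ‖q‖ := Complex.log_re q
      have hlogim : (Complex.log q).im = Complex.arg q := Complex.log_im q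
      have hbound : ‖Complex.log q‖ ≤ |(Complex.log q).re| + |(Complex.log q).im| :=
        Complex.norm_le_abs_re_add_abs_im (Complex.log q)
      have hre_bound : |Real.log ‖q‖| ≤ 1/8 := by
        rcases le_or_gt 1 ‖q‖ with h | h
        · rw [_root_.abs_of_nonneg (Real.log_nonneg h)]
          have := Real.log_le_sub_one_of_pos (show (0:ℝ) < ‖q‖ by linarith)
          linarith
        · rw [_root_.abs_of_neg (Real.log_neg (by linarith) h)]
          have hinv : Real.log ‖q‖ = -Real.log ‖q‖⁻¹ := by
            rw [Real.log_inv]; ring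
          have hpos : (0:ℝ) < ‖q‖ := by linarith
          have h2 : ‖q‖⁻¹ ≤ 9/8 := by
            rw [inv_le_comm₀ hpos (by norm_num)]
            linarith
          have := Real.log_le_sub_one_of_pos (show (0:ℝ) < ‖q‖⁻¹ by positivity)
          rw [hinv]
          linarith
      have him_bound : |Complex.arg q| ≤ 1/8 := by
        have harglt : |Complex.arg q| < Real.pi/2 :=
          Complex.abs_arg_lt_pi_div_two_iff.mpr (Or.inl (by linarith))
        rcases eq_or_ne (Complex.arg q) 0 with h0 | h0
        · rw [h0]; norm_num
        · have htan : Real.tan (Complex.arg q) = q.im / q.re := Complex.tan_arg q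
          have htanabs : |Real.tan (Complex.arg q)| ≤ 1/8 := by
            rw [htan, abs_div]
            rw [_root_.abs_of_nonneg (by linarith : (0:ℝ) ≤ q.re)]
            rw [div_le_iff₀ (by linarith)]
            calc |q.im| ≤ 1/9 := hqim
            _ ≤ 1/8 * (8/9) := by norm_num
            _ ≤ 1/8 * q.re := by nlinarith
          have hlt := Real.lt_tan (abs_pos.mpr h0) harglt
          have htan_abs_eq : Real.tan |Complex.arg q| = |Real.tan (Complex.arg q)| := by
            rcases lt_or_gt_of_ne h0 with h | h
            · rw [_root_.abs_of_neg h, Real.tan_neg, _root_.abs_of_neg]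
              have hpos : 0 < -Complex.arg q := by linarith
              have h2 : 0 < Real.tan (-Complex.arg q) :=
                Real.tan_pos_of_pos_of_lt_pi_div_two hpos (by
                  have := (abs_lt.mp harglt).1; linarith)
              rw [Real.tan_neg] at h2
              linarith
            · rw [_root_.abs_of_pos h, _root_.abs_of_pos]
              exact Real.tan_pos_of_pos_of_lt_pi_div_two h (by
                have := (abs_lt.mp harglt).2; linarith)
          rw [htan_abs_eq] at hlt
          linarith
      calc ‖Complex.log q‖ ≤ |(Complex.log q).re| + |(Complex.log q).im| := hbound
      _ ≤ 1/8 + 1/8 := by rw [hlogre, hlogim]; exact add_le_add hre_bound him_bound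
      _ ≤ 1/2 := by norm_num
    · -- cos z = w
      rw [Complex.cos]
      have e1 : (-Complex.I * Complex.log q) * Complex.I = Complex.log q := by
        have : Complex.I * Complex.I = -1 := Complex.I_mul_I
        ring_nf
        rw [Complex.I_sq]
        ring
      have e2 : -(-Complex.I * Complex.log q) * Complex.I = -Complex.log q := by
        have : Complex.I * Complex.I = -1 := Complex.I_mul_I
        ring_nf
        rw [Complex.I_sq]
        ring
      rw [e1, e2, Complex.exp_log hq0, Complex.exp_neg, Complex.exp_log hq0]
      field_simp
      linear_combination hqquad
end Part2

section Rep
open CosAux Big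

variable {c : ℝ → ℂ}

lemma tendsto_halfpow (b : ℝ) : Filter.Tendsto (fun n : ℕ => b/2^n) Filter.atTop (𝓝 0) := by
  have h2 : Filter.Tendsto (fun n : ℕ => (1/2:ℝ)^n) Filter.atTop (𝓝 0) :=
    tendsto_pow_atTop_nhds_zero_of_lt_one (by norm_num) (by norm_num)
  have h3 := h2.const_mul b
  rw [mul_zero] at h3
  have he : (fun n : ℕ => b/2^n) = fun n : ℕ => b * (1/2:ℝ)^n := by
    funext n
    rw [div_pow, one_pow]
    ring
  rw [he]
  exact h3

theorem exists_cos_rep (hc0 : c 0 = 1)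
    (hc : ∀ s t : ℝ, c (t + s) + c (t - s) = 2 * (c t * c s))
    (hcont : Filter.Tendsto c (𝓝[≠] (0:ℝ)) (𝓝 1)) :
    ∃ a : ℂ, ∀ t : ℝ, c t = Complex.cos (a * t) := by
  have h0' : Filter.Tendsto c (𝓝 (0:ℝ)) (𝓝 1) := by
    rw [← nhdsNE_sup_pure (0:ℝ), Filter.tendsto_sup]
    refine ⟨hcont, ?_⟩
    have hmp : Filter.map c (pure (0:ℝ)) = pure (1:ℂ) := by rw [Filter.map_pure, hc0]
    rw [Filter.Tendsto, hmp]
    exact pure_le_nhds 1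
  -- find δ
  have hev : ∀ᶠ t in 𝓝 (0:ℝ), dist (c t) 1 < 1/500 :=
    Metric.tendsto_nhds.mp h0' (1/500) (by norm_num)
  rw [Metric.eventually_nhds_iff] at hev
  obtain ⟨δ', hδ', hball⟩ := hev
  set δ : ℝ := δ'/2 with hδdef
  have hδ : 0 < δ := by positivity
  have P : ∀ t : ℝ, |t| ≤ δ → ‖c t - 1‖ ≤ 1/500 := by
    intro t ht
    have h1 : dist t 0 < δ' := by rw [Real.dist_eq, sub_zero]; linarith
    have := hball h1
    rw [dist_eq_norm] at this
    linarith
  -- arccos values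
  have hsc : ∀ n : ℕ, |δ/2^n| ≤ δ := by
    intro n
    rw [_root_.abs_of_pos (by positivity)]
    exact div_le_self hδ.le (one_le_pow₀ (by norm_num))
  have hzex : ∀ n : ℕ, ∃ z : ℂ, ‖z‖ ≤ 1/2 ∧ Complex.cos z = c (δ/2^n) :=
    fun n => exists_small_arccos (P _ (hsc n))
  choose z hz1 hz2 using hzex
  -- halving relation
  have hhalf : ∀ n : ℕ, z n = 2 * z (n+1) ∨ z n = -(2 * z (n+1)) := by
    intro n
    have hcc : Complex.cos (2 * z (n+1)) = Complex.cos (z n) := by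
      rw [Complex.cos_two_mul, hz2 (n+1), hz2 n]
      have harg : 2*(δ/2^(n+1)) = δ/2^n := by
        rw [pow_succ]; field_simp
      rw [← c_double hc0 hc (δ/2^(n+1)), harg]
    have hdiff := Complex.cos_sub_cos (2*z (n+1)) (z n)
    rw [hcc, sub_self] at hdiff
    have hzero : Complex.sin ((2*z (n+1) + z n)/2) * Complex.sin ((2*z (n+1) - z n)/2) = 0 := by
      linear_combination hdiff / 2
    have hbound : ∀ w : ℂ, ‖w‖ ≤ 3/4 → Complex.sin w = 0 → w = 0 := by
      intro w hw hs
      obtain ⟨kk, hkk⟩ := Complex.sin_eq_zero_iff.mp hs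
      rcases eq_or_ne kk 0 with rfl | hk0
      · simpa using hkk
      · exfalso
        have hcast : (kk:ℂ) * (Real.pi:ℂ) = (((kk:ℝ) * Real.pi : ℝ) : ℂ) := by push_cast; ring
        rw [hkk, hcast] at hw
        rw [Complex.norm_real, Real.norm_eq_abs] at hw
        have h1 : (1:ℝ) ≤ |(kk:ℝ)| := by
          have := Int.one_le_abs hk0
          exact_mod_cast this
        have h2 : |(kk:ℝ) * Real.pi| = |(kk:ℝ)| * Real.pi := by
          rw [abs_mul, _root_.abs_of_pos Real.pi_pos]
        rw [h2] at hw
        nlinarith [Real.pi_gt_three]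
    have hmul2 : ‖2*z (n+1)‖ = 2*‖z (n+1)‖ := by
      rw [norm_mul]
      norm_num
    have hn1 : ‖(2*z (n+1) + z n)/2‖ ≤ 3/4 := by
      have hA : ‖2*z (n+1) + z n‖ ≤ 3/2 := by
        calc ‖2*z (n+1) + z n‖ ≤ ‖2*z (n+1)‖ + ‖z n‖ := norm_add_le _ _
        _ = 2*‖z (n+1)‖ + ‖z n‖ := by rw [hmul2]
        _ ≤ 3/2 := by linarith [hz1 n, hz1 (n+1)]
      calc ‖(2*z (n+1) + z n)/2‖ = ‖2*z (n+1) + z n‖/2 := by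
            rw [norm_div]; norm_num
      _ ≤ 3/4 := by linarith
    have hn2 : ‖(2*z (n+1) - z n)/2‖ ≤ 3/4 := by
      have hA : ‖2*z (n+1) - z n‖ ≤ 3/2 := by
        calc ‖2*z (n+1) - z n‖ ≤ ‖2*z (n+1)‖ + ‖z n‖ := norm_sub_le _ _
        _ = 2*‖z (n+1)‖ + ‖z n‖ := by rw [hmul2]
        _ ≤ 3/2 := by linarith [hz1 n, hz1 (n+1)]
      calc ‖(2*z (n+1) - z n)/2‖ = ‖2*z (n+1) - z n‖/2 := by
            rw [norm_div]; norm_num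
      _ ≤ 3/4 := by linarith
    rcases mul_eq_zero.mp hzero with h | h
    · right
      have hz0 := hbound _ hn1 h
      have h3 : 2*z (n+1) + z n = 0 := by
        rcases div_eq_zero_iff.mp hz0 with h4 | h4
        · exact h4
        · exact absurd h4 (by norm_num)
      linear_combination h3
    · left
      have hz0 := hbound _ hn2 h
      have h3 : 2*z (n+1) - z n = 0 := by
        rcases div_eq_zero_iff.mp hz0 with h4 | h4
        · exact h4
        · exact absurd h4 (by norm_num)
      linear_combination -h3
  -- coherence
  have hcoh : ∀ n : ℕ, Complex.cos (z 0 / 2^n) = c (δ/2^n) ∧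
      (z 0 / 2^n = z n ∨ z 0/2^n = - z n) := by
    intro n
    induction n with
    | zero =>
      refine ⟨by simpa using hz2 0, Or.inl (by simp)⟩
    | succ n ih =>
      obtain ⟨ihc, ihpm⟩ := ih
      have hrel := hhalf n
      have e : z 0/2^(n+1) = (z 0/2^n)/2 := by rw [pow_succ]; ring
      have hpm : z 0 / 2^(n+1) = z (n+1) ∨ z 0/2^(n+1) = - z (n+1) := by
        rcases ihpm with h | h <;> rcases hrel with h2 | h2
        · left; rw [e, h, h2]; ring
        · right; rw [e, h, h2]; ring
        · right; rw [e, h, h2]; ring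
        · left; rw [e, h, h2]; ring
      refine ⟨?_, hpm⟩
      rcases hpm with h | h
      · rw [h]; exact hz2 (n+1)
      · rw [h, Complex.cos_neg]; exact hz2 (n+1)
  -- dyadic values
  have hdyad : ∀ (n : ℕ) (m : ℕ), c ((m:ℝ) * (δ/2^n)) = Complex.cos ((m:ℂ) * (z 0/2^n)) := by
    intro n m
    rw [c_nat_mul hc0 hc m (δ/2^n), ← (hcoh n).1, ch_cos]
  have hdyadZ : ∀ (n : ℕ) (m : ℤ), c ((m:ℝ) * (δ/2^n)) = Complex.cos ((m:ℂ) * (z 0/2^n)) := by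
    intro n m
    obtain ⟨mm, he | he⟩ := Int.eq_nat_or_neg m
    · rw [he]
      exact_mod_cast hdyad n mm
    · have h := hdyad n mm
      have hcast1 : (((-(mm:ℤ)):ℤ):ℝ) * (δ/2^n) = -(((mm:ℕ):ℝ) * (δ/2^n)) := by
        push_cast; ring
      have hcast2 : (((-(mm:ℤ)):ℤ):ℂ) * (z 0/2^n) = -(((mm:ℕ):ℂ) * (z 0/2^n)) := by
        push_cast; ring
      rw [he, hcast1, hcast2, c_even hc0 hc, Complex.cos_neg]
      exact h
  -- the candidate
  refine ⟨z 0 / (δ:ℂ), fun t => ?_⟩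
  set k : ℕ → ℤ := fun n => ⌊t * 2^n / δ⌋ with hk
  set r : ℕ → ℝ := fun n => ((k n : ℝ)) * (δ/2^n) with hr
  have hδC : ((δ:ℝ):ℂ) ≠ 0 := by
    simp only [ne_eq, Complex.ofReal_eq_zero]
    exact hδ.ne'
  have hrt : ∀ n, |t - r n| ≤ δ/2^n := by
    intro n
    have hpow : (0:ℝ) < 2^n := by positivity
    have h1 := Int.floor_le (t * 2^n/δ)
    have h2 := Int.lt_floor_add_one (t * 2^n/δ)
    have hXt : (t * 2^n/δ) * (δ/2^n) = t := by field_simp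
    rw [hr]
    simp only
    rw [abs_le]
    constructor
    · nlinarith [div_pos hδ hpow]
    · nlinarith [div_pos hδ hpow]
  have hrc : ∀ n, c (r n) = Complex.cos ((z 0 / (δ:ℂ)) * ((r n : ℝ) : ℂ)) := by
    intro n
    have h := hdyadZ n (k n)
    rw [hr]
    simp only
    rw [h]
    congr 1
    push_cast
    field_simp
  have hrtend : Filter.Tendsto r Filter.atTop (𝓝 t) := by
    rw [tendsto_iff_dist_tendsto_zero]
    refine squeeze_zero (fun n => dist_nonneg) (fun n => ?_) (tendsto_halfpow δ)
    rw [Real.dist_eq, abs_sub_comm]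
    exact hrt n
  -- local bound
  have hM2 : ∀ s : ℝ, |s| ≤ δ → ‖c s‖ ≤ 2 := by
    intro s hs
    have := P s hs
    have h2 := norm_add_le (c s - 1) 1
    rw [show c s - 1 + 1 = c s by ring] at h2
    simp only [norm_one] at h2
    linarith
  obtain ⟨CB, hCB⟩ := c_locally_bounded hc0 hc hδ hM2 (|t| + δ)
  have hCB0 : 0 ≤ CB := le_trans (norm_nonneg (c 0)) (hCB 0 (by rw [abs_zero]; positivity))
  -- c (r n) → c t
  have hδn : ∀ n : ℕ, δ/2^n ≤ δ := fun n => div_le_self hδ.le (one_le_pow₀ (by norm_num))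
  have hSn : ∀ n, ‖c t - c (r n)‖^2 ≤ 4*(CB^2+1)*‖(c ((t - r n)/2))^2 - 1‖ := by
    intro n
    have hid := c_diff_sq hc0 hc t (r n)
    have hu : |(t + r n)/2| ≤ |t| + δ := by
      have h1 : |r n - t| ≤ δ := by
        rw [abs_sub_comm]
        exact le_trans (hrt n) (hδn n)
      have h2 : |r n| ≤ |t| + δ := by
        calc |r n| = |t + (r n - t)| := by ring_nf
        _ ≤ |t| + |r n - t| := abs_add_le _ _
        _ ≤ |t| + δ := by linarith
      calc |(t + r n)/2| = |t + r n|/2 := by rw [abs_div]; norm_num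
      _ ≤ (|t| + |r n|)/2 := by linarith [abs_add_le t (r n)]
      _ ≤ |t| + δ := by linarith [abs_nonneg t, hδ]
    have hb1 : ‖c ((t + r n)/2)‖ ≤ CB := hCB _ hu
    have hb2 : ‖(c ((t + r n)/2))^2 - 1‖ ≤ CB^2 + 1 := by
      calc ‖(c ((t + r n)/2))^2 - 1‖ ≤ ‖(c ((t + r n)/2))^2‖ + 1 := by
            have := norm_sub_le ((c ((t + r n)/2))^2) 1
            simpa using this
      _ = ‖c ((t + r n)/2)‖^2 + 1 := by rw [norm_pow]
      _ ≤ CB^2 + 1 := by nlinarith [norm_nonneg (c ((t + r n)/2))]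
    calc ‖c t - c (r n)‖^2 = ‖(c t - c (r n))^2‖ := (norm_pow _ 2).symm
    _ = ‖(4:ℂ) * ((c ((t+r n)/2))^2 - 1) * ((c ((t-r n)/2))^2 - 1)‖ := by rw [hid]
    _ = 4 * ‖(c ((t+r n)/2))^2 - 1‖ * ‖(c ((t-r n)/2))^2 - 1‖ := by
          rw [norm_mul, norm_mul]
          norm_num
    _ ≤ 4*(CB^2+1)*‖(c ((t - r n)/2))^2 - 1‖ := by
          nlinarith [norm_nonneg ((c ((t - r n)/2))^2 - 1), norm_nonneg ((c ((t+r n)/2))^2 - 1)]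
  have hvt : Filter.Tendsto (fun n => (t - r n)/2) Filter.atTop (𝓝 0) := by
    have h1 : Filter.Tendsto (fun n => t - r n) Filter.atTop (𝓝 (t - t)) :=
      tendsto_const_nhds.sub hrtend
    rw [sub_self] at h1
    simpa using h1.div_const 2
  have hcv : Filter.Tendsto (fun n => c ((t - r n)/2)) Filter.atTop (𝓝 1) := h0'.comp hvt
  have hcv2 : Filter.Tendsto (fun n => ‖(c ((t - r n)/2))^2 - 1‖) Filter.atTop (𝓝 0) := by
    have h1 : Filter.Tendsto (fun n => (c ((t - r n)/2))^2 - 1) Filter.atTop (𝓝 ((1:ℂ)^2 - 1)) :=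
      (hcv.pow 2).sub tendsto_const_nhds
    rw [show ((1:ℂ)^2 - 1) = 0 by norm_num] at h1
    simpa using h1.norm
  have hsq0 : Filter.Tendsto (fun n => ‖c t - c (r n)‖^2) Filter.atTop (𝓝 0) := by
    apply squeeze_zero (fun n => sq_nonneg _) hSn
    have := hcv2.const_mul (4*(CB^2+1))
    simpa using this
  have hnorm0 : Filter.Tendsto (fun n => ‖c t - c (r n)‖) Filter.atTop (𝓝 0) := by
    have h1 := (Real.continuous_sqrt.tendsto 0).comp hsq0
    have h2 : (Real.sqrt ∘ fun n => ‖c t - c (r n)‖^2) = fun n => ‖c t - c (r n)‖ := by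
      funext n
      simp only [Function.comp_apply]
      exact Real.sqrt_sq (norm_nonneg _)
    rw [h2] at h1
    simpa using h1
  have hdiffT : Filter.Tendsto (fun n => c (r n)) Filter.atTop (𝓝 (c t)) := by
    rw [tendsto_iff_norm_sub_tendsto_zero]
    apply squeeze_zero (fun n => norm_nonneg _) (fun n => le_of_eq (norm_sub_rev _ _)) hnorm0
  have hcos_t : Filter.Tendsto (fun n => Complex.cos ((z 0 / (δ:ℂ)) * ((r n : ℝ) : ℂ)))
      Filter.atTop (𝓝 (Complex.cos ((z 0 / (δ:ℂ)) * (t : ℂ)))) := by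
    apply (Complex.continuous_cos.tendsto _).comp
    exact tendsto_const_nhds.mul ((Complex.continuous_ofReal.tendsto t).comp hrtend)
  have heq : (fun n => c (r n)) = fun n => Complex.cos ((z 0 / (δ:ℂ)) * ((r n : ℝ) : ℂ)) :=
    funext hrc
  rw [heq] at hdiffT
  exact tendsto_nhds_unique hdiffT hcos_t

end Rep

section Final
open CosAux Big Filter

variable {c : ℝ → ℂ}

lemma delta_of_ev (hc0 : c 0 = 1) {l : ℝ} (hl0 : 0 ≤ l)
    (hev : ∀ᶠ t in 𝓝[≠] (0:ℝ), ‖c t - 1‖ ≤ l) :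
    ∃ δ : ℝ, 0 < δ ∧ ∀ t : ℝ, |t| ≤ δ → ‖c t - 1‖ ≤ l := by
  rw [eventually_nhdsWithin_iff, Metric.eventually_nhds_iff] at hev
  obtain ⟨ε, hε, hball⟩ := hev
  refine ⟨ε/2, by positivity, fun t ht => ?_⟩
  by_cases h0 : t = 0
  · rw [h0, hc0]
    simpa using hl0
  · exact hball (show dist t 0 < ε by rw [Real.dist_eq, sub_zero]; linarith [abs_nonneg t])
      (by simpa using h0)

lemma main_lt_two (hc0 : c 0 = 1)
    (hc : ∀ s t : ℝ, c (t + s) + c (t - s) = 2 * (c t * c s))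
    (hL : Filter.limsup (fun t : ℝ => (‖c t - 1‖₊ : ℝ≥0∞)) (𝓝[≠] (0:ℝ)) < 2) :
    Filter.Tendsto c (𝓝[≠] (0:ℝ)) (𝓝 1) := by
  obtain ⟨b, hb1, hb2⟩ := exists_between hL
  have hbne : b ≠ ⊤ := ne_top_of_lt hb2
  have hev0 : ∀ᶠ t in 𝓝[≠] (0:ℝ), (‖c t - 1‖₊ : ℝ≥0∞) < b :=
    Filter.eventually_lt_of_limsup_lt hb1
  have hl0 : 0 ≤ b.toReal := ENNReal.toReal_nonneg
  have hl2 : b.toReal < 2 := by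
    have h := ENNReal.toReal_strict_mono (by norm_num) hb2
    simpa using h
  have hev : ∀ᶠ t in 𝓝[≠] (0:ℝ), ‖c t - 1‖ ≤ b.toReal := by
    filter_upwards [hev0] with t ht
    have h2 : ENNReal.ofReal ‖c t - 1‖ ≤ b := by
      rw [ofReal_norm]
      exact ht.le
    exact (ENNReal.ofReal_le_iff_le_toReal hbne).mp h2
  obtain ⟨δ, hδ, hP⟩ := delta_of_ev hc0 hl0 hev
  exact tendsto_one_of_small hc0 hc hl0 hl2 hδ hP

lemma limsup_eq_zero_of_tendsto (h : Filter.Tendsto c (𝓝[≠] (0:ℝ)) (𝓝 1)) :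
    Filter.limsup (fun t : ℝ => (‖c t - 1‖₊ : ℝ≥0∞)) (𝓝[≠] (0:ℝ)) = 0 := by
  have hcont : ContinuousAt (fun zz : ℂ => ((‖zz - 1‖₊ : ℝ≥0) : ℝ≥0∞)) 1 :=
    (ENNReal.continuous_coe.comp
      (continuous_nnnorm.comp (continuous_id.sub continuous_const))).continuousAt
  have h2 : Filter.Tendsto (fun t : ℝ => (‖c t - 1‖₊ : ℝ≥0∞)) (𝓝[≠] (0:ℝ)) (𝓝 0) := by
    have h3 := hcont.tendsto.comp h
    simp at h3
    exact h3
  exact h2.limsup_eq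

lemma limsup_le_two (hc0 : c 0 = 1)
    (hc : ∀ s t : ℝ, c (t + s) + c (t - s) = 2 * (c t * c s))
    (hL : Filter.limsup (fun t : ℝ => (‖c t - 1‖₊ : ℝ≥0∞)) (𝓝[≠] (0:ℝ)) ≠ ⊤) :
    Filter.limsup (fun t : ℝ => (‖c t - 1‖₊ : ℝ≥0∞)) (𝓝[≠] (0:ℝ)) ≤ 2 := by
  set L := Filter.limsup (fun t : ℝ => (‖c t - 1‖₊ : ℝ≥0∞)) (𝓝[≠] (0:ℝ)) with hLdef
  have h1 : L < L + 1 := ENNReal.lt_add_right hL one_ne_zero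
  have hev0 : ∀ᶠ t in 𝓝[≠] (0:ℝ), (‖c t - 1‖₊ : ℝ≥0∞) < L + 1 :=
    Filter.eventually_lt_of_limsup_lt h1
  have hL1ne : L + 1 ≠ ⊤ := by
    rw [Ne, ENNReal.add_eq_top]
    push_neg
    exact ⟨hL, by norm_num⟩
  set l : ℝ := (L+1).toReal with hldef
  have hl0 : 0 ≤ l := ENNReal.toReal_nonneg
  have hev : ∀ᶠ t in 𝓝[≠] (0:ℝ), ‖c t - 1‖ ≤ l := by
    filter_upwards [hev0] with t ht
    have h2 : ENNReal.ofReal ‖c t - 1‖ ≤ L + 1 := by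
      rw [ofReal_norm]
      exact ht.le
    exact (ENNReal.ofReal_le_iff_le_toReal hL1ne).mp h2
  obtain ⟨δ, hδ, hP⟩ := delta_of_ev hc0 hl0 hev
  have key : ∀ n : ℕ, L ≤ ENNReal.ofReal (2 + l/2^n) := by
    intro n
    refine Filter.limsup_le_of_le (by isBoundedDefault) ?_
    have hevn : ∀ᶠ t in 𝓝 (0:ℝ), |t| ≤ δ/2^n := by
      filter_upwards [Metric.closedBall_mem_nhds (0:ℝ) (show (0:ℝ) < δ/2^n by positivity)] with t ht
      simpa [Real.dist_eq] using ht
    filter_upwards [hevn.filter_mono nhdsWithin_le_nhds] with t ht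
    have hb := norm_halving hc0 hc hl0 hP n t ht
    have hb2 : ‖c t - 1‖ ≤ 2 + l/2^n := by
      have h3 := norm_sub_le (c t) 1
      simp only [norm_one] at h3
      linarith
    calc (‖c t - 1‖₊ : ℝ≥0∞) = ENNReal.ofReal ‖c t - 1‖ := (ofReal_norm _).symm
    _ ≤ ENNReal.ofReal (2 + l/2^n) := ENNReal.ofReal_le_ofReal hb2
  apply ENNReal.le_of_forall_pos_le_add
  intro ε hε _
  have hεR : (0:ℝ) < (ε:ℝ) := hε
  obtain ⟨n, hn⟩ := exists_pow_lt_of_lt_one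
    (show (0:ℝ) < (ε:ℝ)/(l+1) by positivity) (show (1/2:ℝ) < 1 by norm_num)
  have hln : l/2^n ≤ (ε:ℝ) := by
    have e1 : l/2^n = l * (1/2:ℝ)^n := by
      rw [div_pow, one_pow]
      ring
    have e2 : (l+1) * ((ε:ℝ)/(l+1)) = (ε:ℝ) := by
      field_simp
    have e3 := mul_le_mul_of_nonneg_left hn.le (show (0:ℝ) ≤ l+1 by linarith)
    rw [e2] at e3
    have e4 : l * (1/2:ℝ)^n ≤ (l+1) * (1/2:ℝ)^n := by
      apply mul_le_mul_of_nonneg_right (by linarith) (by positivity)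
    rw [e1]
    linarith
  calc L ≤ ENNReal.ofReal (2 + l/2^n) := key n
  _ ≤ 2 + (ε : ℝ≥0∞) := by
    rw [ENNReal.ofReal_add (by norm_num) (by positivity)]
    apply add_le_add
    · exact le_of_eq (by norm_num)
    · calc ENNReal.ofReal (l/2^n) ≤ ENNReal.ofReal ((ε:ℝ)) := ENNReal.ofReal_le_ofReal hln
      _ = (ε : ℝ≥0∞) := ENNReal.ofReal_coe_nnreal

end Final

/-- For a scalar cosine family `c : ℝ → ℂ`, the limit superior
`limsup_{t → 0} |c t - 1|` (in `ℝ≥0∞`, along the punctured neighborhood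
filter of `0`) is `0`, `2`, or `∞`; moreover if it is `0` then
`c t = cos (a t)` for some `a ∈ ℂ`. -/
theorem scalar_cosine_limsup_zero_trichotomy (c : ℝ → ℂ)
    (hc0 : c 0 = 1)
    (hc : ∀ s t : ℝ, c (t + s) + c (t - s) = 2 * (c t * c s)) :
    (Filter.limsup (fun t : ℝ => (‖c t - 1‖₊ : ℝ≥0∞)) (nhdsWithin 0 {0}ᶜ) = 0 ∨
      Filter.limsup (fun t : ℝ => (‖c t - 1‖₊ : ℝ≥0∞)) (nhdsWithin 0 {0}ᶜ) = 2 ∨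
      Filter.limsup (fun t : ℝ => (‖c t - 1‖₊ : ℝ≥0∞)) (nhdsWithin 0 {0}ᶜ) = ⊤) ∧
    (Filter.limsup (fun t : ℝ => (‖c t - 1‖₊ : ℝ≥0∞)) (nhdsWithin 0 {0}ᶜ) = 0 →
      ∃ a : ℂ, ∀ t : ℝ, c t = Complex.cos (a * t)) := by
  constructor
  · by_cases htop :
      Filter.limsup (fun t : ℝ => (‖c t - 1‖₊ : ℝ≥0∞)) (nhdsWithin (0:ℝ) {0}ᶜ) = ⊤
    · exact Or.inr (Or.inr htop)
    · rcases lt_or_ge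
        (Filter.limsup (fun t : ℝ => (‖c t - 1‖₊ : ℝ≥0∞)) (nhdsWithin (0:ℝ) {0}ᶜ)) 2 with
        hlt | hge
      · exact Or.inl (limsup_eq_zero_of_tendsto (main_lt_two hc0 hc hlt))
      · exact Or.inr (Or.inl (le_antisymm (limsup_le_two hc0 hc htop) hge))
  · intro h0
    refine exists_cos_rep hc0 hc (main_lt_two hc0 hc ?_)
    rw [h0]
    norm_num
end

section
/- Let A be a unital complex Banach algebra and let C : ℝ → A be a cosine family, i.e. C(0) = 1 and C(t+s) + C(t−s) = 2·C(t)·C(s) for all s, t ∈ ℝ. If limsup_{t→∞} ρ(C(t) − 1) < 2, where ρ denotes the spectral radius in A, then ρ(C(t) − 1) = 0 for all t ∈ ℝ. -/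
open scoped ENNReal

open Filter
namespace CosAux

/-- Chebyshev-type closed form along integer multiples. -/
lemma cheb (c : ℝ → ℂ) (hC0 : c 0 = 1)
    (hC : ∀ s t : ℝ, c (t + s) + c (t - s) = 2 * (c t * c s))
    (u : ℝ) (z : ℂ) (hz : z ≠ 0) (hsum : z + z⁻¹ = 2 * c u) :
    ∀ n : ℕ, c (n * u) = (z ^ n + z⁻¹ ^ n) / 2 := by
  have hzw : z * z⁻¹ = 1 := mul_inv_cancel₀ hz
  set P : ℕ → Prop := fun m => c ((m : ℝ) * u) = (z ^ m + z⁻¹ ^ m) / 2 with hP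
  suffices key : ∀ n : ℕ, P n ∧ P (n + 1) from fun n => (key n).1
  intro n
  induction n with
  | zero =>
    constructor
    · show c ((0:ℕ) * u) = (z ^ (0:ℕ) + z⁻¹ ^ (0:ℕ)) / 2
      norm_num [hC0]
    · show c ((0+1:ℕ) * u) = (z ^ (0+1:ℕ) + z⁻¹ ^ (0+1:ℕ)) / 2
      norm_num
      linear_combination hsum * (-1/2 : ℂ)
  | succ n ih =>
    refine ⟨ih.2, ?_⟩
    show c ((n+1+1:ℕ) * u) = (z ^ (n+1+1:ℕ) + z⁻¹ ^ (n+1+1:ℕ)) / 2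
    have h1 := hC u (((n+1:ℕ) : ℝ) * u)
    have e1 : ((n+1:ℕ) : ℝ) * u + u = ((n+1+1:ℕ) : ℝ) * u := by push_cast; ring
    have e2 : ((n+1:ℕ) : ℝ) * u - u = ((n:ℕ) : ℝ) * u := by push_cast; ring
    rw [e1, e2, ih.1, ih.2] at h1
    linear_combination h1 - ((z^(n+1) + z⁻¹^(n+1))/2) * hsum + ((z^n + z⁻¹^n)/2) * hzw

end CosAux

namespace CosAux2
open CosAux

/-- There exists `z` with `z + z⁻¹ = 2 * c u`. -/
lemma exists_z (w : ℂ) : ∃ z : ℂ, z ≠ 0 ∧ z + z⁻¹ = 2 * w := by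
  obtain ⟨v, hv⟩ := IsAlgClosed.exists_pow_nat_eq (w ^ 2 - 1) (n := 2) two_pos
  refine ⟨w + v, ?_, ?_⟩
  · intro h0
    have : (w + v) * (w - v) = 1 := by linear_combination -hv
    rw [h0, zero_mul] at this
    exact zero_ne_one this
  · have hmul : (w + v) * (w - v) = 1 := by linear_combination -hv
    have hinv : (w + v)⁻¹ = w - v := inv_eq_of_mul_eq_one_right hmul
    rw [hinv]; ring

end CosAux2

namespace CosAux3
open CosAux CosAux2

lemma not_one_lt_abs (c : ℝ → ℂ) (hC0 : c 0 = 1)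
    (hC : ∀ s t : ℝ, c (t + s) + c (t - s) = 2 * (c t * c s))
    {T L' : ℝ} (hbound : ∀ t ≥ T, ‖c t - 1‖ ≤ L')
    {u : ℝ} (hu : 0 < u) (z : ℂ) (hz : z ≠ 0) (hsum : z + z⁻¹ = 2 * c u) :
    ¬ 1 < ‖z‖ := by
  intro hlt
  -- eventually ‖z‖^n is large and n*u ≥ T
  have h1 : Tendsto (fun n : ℕ => ‖z‖ ^ n) atTop atTop :=
    tendsto_pow_atTop_atTop_of_one_lt hlt
  have h2 : Tendsto (fun n : ℕ => (n : ℝ) * u) atTop atTop :=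
    Tendsto.atTop_mul_const hu tendsto_natCast_atTop_atTop
  obtain ⟨n, hn1, hn2⟩ :=
    ((h1.eventually_ge_atTop (2 * L' + 4)).and (h2.eventually_ge_atTop T)).exists
  have hcheb := cheb c hC0 hC u z hz hsum n
  have hb := hbound _ hn2
  rw [hcheb] at hb
  have hzinv : ‖z⁻¹‖ ≤ 1 := by
    rw [norm_inv]
    exact inv_le_one_of_one_le₀ hlt.le
  have hlow : ‖z‖ ^ n ≤ ‖z ^ n + z⁻¹ ^ n‖ + 1 := by
    have := norm_add_le (z ^ n + z⁻¹ ^ n) (-(z⁻¹ ^ n))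
    simp only [add_neg_cancel_right, norm_neg] at this
    calc ‖z‖ ^ n = ‖z ^ n‖ := (norm_pow _ _).symm
      _ ≤ ‖z ^ n + z⁻¹ ^ n‖ + ‖z⁻¹ ^ n‖ := this
      _ ≤ ‖z ^ n + z⁻¹ ^ n‖ + 1 := by
          gcongr
          rw [norm_pow]
          exact pow_le_one₀ (norm_nonneg _) hzinv
  have hup : ‖z ^ n + z⁻¹ ^ n‖ ≤ 2 * L' + 2 := by
    have h3 : ‖(z ^ n + z⁻¹ ^ n)/2 - 1‖ ≤ L' := hb
    have h4 : ‖(z ^ n + z⁻¹ ^ n)/2‖ ≤ L' + 1 := by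
      calc ‖(z ^ n + z⁻¹ ^ n)/2‖
          = ‖(z ^ n + z⁻¹ ^ n)/2 - 1 + 1‖ := by ring_nf
        _ ≤ ‖(z ^ n + z⁻¹ ^ n)/2 - 1‖ + ‖(1:ℂ)‖ := norm_add_le _ _
        _ ≤ L' + 1 := by simpa using h3
    rw [norm_div] at h4
    simp only [Complex.norm_two] at h4
    linarith
  linarith

end CosAux3

namespace CosAux4
open CosAux CosAux2 CosAux3 Complex

lemma exists_theta (c : ℝ → ℂ) (hC0 : c 0 = 1)
    (hC : ∀ s t : ℝ, c (t + s) + c (t - s) = 2 * (c t * c s))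
    {T L' : ℝ} (hbound : ∀ t ≥ T, ‖c t - 1‖ ≤ L')
    {u : ℝ} (hu : 0 < u) :
    ∃ θ : ℝ, ∀ n : ℕ, c ((n : ℝ) * u) = ((Real.cos ((n : ℝ) * θ) : ℝ) : ℂ) := by
  obtain ⟨z, hz, hsum⟩ := exists_z (c u)
  have habs : ‖z‖ = 1 := by
    rcases lt_trichotomy ‖z‖ 1 with hlt | heq | hgt
    · exfalso
      have hz' : z⁻¹ ≠ 0 := inv_ne_zero hz
      have hsum' : z⁻¹ + (z⁻¹)⁻¹ = 2 * c u := by rw [inv_inv, add_comm]; exact hsum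
      have habs' : 1 < ‖z⁻¹‖ := by
        rw [norm_inv]
        have h0 : 0 < ‖z‖ := norm_pos_iff.mpr hz
        rw [lt_inv_comm₀ one_pos h0] -- guess
        simpa using hlt
      exact not_one_lt_abs c hC0 hC hbound hu z⁻¹ hz' hsum' habs'
    · exact heq
    · exact absurd hgt (not_one_lt_abs c hC0 hC hbound hu z hz hsum)
  refine ⟨z.arg, fun n => ?_⟩
  have hzexp : Complex.exp ((z.arg : ℂ) * I) = z := by
    have := Complex.norm_mul_exp_arg_mul_I z
    rwa [habs, Complex.ofReal_one, one_mul] at this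
  have h1 : z ^ n = Complex.exp ((((n : ℝ) * z.arg : ℝ) : ℂ) * I) := by
    rw [show ((((n : ℝ) * z.arg : ℝ) : ℂ) * I) = (n : ℂ) * ((z.arg : ℂ) * I) by push_cast; ring,
      Complex.exp_nat_mul, hzexp]
  have h2 : z⁻¹ ^ n = Complex.exp (-((((n : ℝ) * z.arg : ℝ) : ℂ)) * I) := by
    rw [show (-((((n : ℝ) * z.arg : ℝ) : ℂ)) * I) = (n : ℂ) * (-((z.arg : ℂ) * I)) by push_cast; ring,
      Complex.exp_nat_mul, Complex.exp_neg, hzexp]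
  rw [cheb c hC0 hC u z hz hsum n, h1, h2, Complex.ofReal_cos, Complex.cos]

end CosAux4

namespace CosAux5
open Real

set_option maxHeartbeats 1000000 in
/-- The core number-theoretic lemma: if `cos (n θ)` stays `≥ -1 + ε` for all large `n`,
then some small multiple of `θ` is in `2πℤ`. -/
lemma lemR {ε : ℝ} (hε : 0 < ε) (θ : ℝ) (N : ℕ)
    (hP : ∀ n : ℕ, N ≤ n → -1 + ε ≤ Real.cos ((n : ℝ) * θ)) :
    ∃ b : ℕ, 0 < b ∧ (b : ℝ) ≤ π / Real.sqrt (2*ε) ∧ Real.cos ((b : ℝ) * θ) = 1 := by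
  have hπ : (0:ℝ) < π := Real.pi_pos
  by_cases hrat : ∃ b : ℕ, 0 < b ∧ ∃ k : ℤ, (b : ℝ) * θ = (k : ℝ) * (2 * π)
  · -- rational case
    classical
    set b₀ := Nat.find hrat with hb₀def
    obtain ⟨hb₀pos, k₀, hk₀⟩ := Nat.find_spec hrat
    rw [← hb₀def] at hb₀pos hk₀
    have hb₀R : (0:ℝ) < (b₀ : ℝ) := by exact_mod_cast hb₀pos
    -- coprimality of k₀ and b₀
    have hcop : Int.gcd k₀ (b₀ : ℤ) = 1 := by
      by_contra hne
      set d := Int.gcd k₀ (b₀ : ℤ) with hd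
      have hd0 : 0 < d := Int.gcd_pos_iff.mpr (Or.inr (by exact_mod_cast hb₀pos.ne'))
      have hd2 : 2 ≤ d := by omega
      obtain ⟨b', hb'⟩ := (Int.gcd_dvd_right k₀ (b₀ : ℤ) : (d : ℤ) ∣ (b₀ : ℤ))
      obtain ⟨k', hk'⟩ := (Int.gcd_dvd_left k₀ (b₀ : ℤ) : (d : ℤ) ∣ k₀)
      have hb'pos : 0 < b' := by
        by_contra hb'0
        push_neg at hb'0
        have : (b₀ : ℤ) ≤ 0 := hb' ▸ mul_nonpos_of_nonneg_of_nonpos (by positivity) hb'0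
        omega
      have hb''lt : b'.toNat < b₀ := by
        have h1 : (b₀ : ℤ) = d * b' := hb'
        have := Int.toNat_of_nonneg hb'pos.le
        nlinarith [hb'pos, hd2, this]
      refine Nat.find_min hrat hb''lt ⟨by omega, k', ?_⟩
      have hd0' : (d : ℝ) ≠ 0 := Nat.cast_ne_zero.mpr hd0.ne'
      have hb0R : (b₀ : ℝ) = (d : ℝ) * (b'.toNat : ℝ) := by
        have : (b₀ : ℤ) = (d : ℤ) * (b'.toNat : ℤ) := by rw [Int.toNat_of_nonneg hb'pos.le]; exact hb'
        exact_mod_cast this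
      have hk0R : (k₀ : ℝ) = (d : ℝ) * (k' : ℝ) := by exact_mod_cast hk'
      apply mul_left_cancel₀ hd0'
      calc (d : ℝ) * ((b'.toNat : ℝ) * θ) = (b₀ : ℝ) * θ := by rw [hb0R]; ring
        _ = (k₀ : ℝ) * (2 * π) := hk₀
        _ = (d : ℝ) * ((k' : ℝ) * (2 * π)) := by rw [hk0R]; ring
    -- Bezout
    obtain ⟨x, y, hxy⟩ := Int.isCoprime_iff_gcd_eq_one.mpr hcop
    clear_value b₀
    set r : ℕ := b₀ / 2 with hrdef
    set j : ℤ := (N : ℤ) + ((r : ℤ) * x).natAbs + 1 with hjdef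
    set n' : ℤ := (r : ℤ) * x + (b₀ : ℤ) * j with hn'def
    have hb₀1 : 1 ≤ (b₀ : ℤ) := by exact_mod_cast hb₀pos
    have hn'N : (N : ℤ) < n' := by
      have habs : -((r : ℤ) * x).natAbs ≤ (r : ℤ) * x := by
        rcases Int.natAbs_eq ((r : ℤ) * x) with he | he <;> omega
      have hj1 : (N : ℤ) + ((r : ℤ) * x).natAbs + 1 ≤ (b₀ : ℤ) * j := by
        rw [hjdef]
        nlinarith [hb₀1, (by positivity : (0:ℤ) ≤ (N : ℤ) + ((r : ℤ) * x).natAbs + 1)]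
      omega
    set n : ℕ := n'.toNat with hndef
    have hnn' : (n : ℤ) = n' := Int.toNat_of_nonneg (by omega)
    clear_value r j n' n
    have hnN : N ≤ n := by omega
    -- congruence : n * k₀ = r + b₀ * s
    set s : ℤ := j * k₀ - (r : ℤ) * y with hsdef
    clear_value s
    have hcong : (n : ℤ) * k₀ = (r : ℤ) + (b₀ : ℤ) * s := by
      rw [hnn', hn'def, hsdef]
      linear_combination (r : ℤ) * hxy
    -- compute cos (n θ)
    have hnθ : (n : ℝ) * θ = 2 * π * r / b₀ + (s : ℝ) * (2 * π) := by
      apply mul_left_cancel₀ hb₀R.ne'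
      have h3 : ((n : ℝ) * (k₀ : ℝ)) = (r : ℝ) + (b₀ : ℝ) * (s : ℝ) := by exact_mod_cast hcong
      have h2 : (b₀ : ℝ) * ((n : ℝ) * θ) = (n : ℝ) * ((b₀ : ℝ) * θ) := by ring
      rw [h2, hk₀]
      field_simp
      nlinarith [h3]
    have hcosn : Real.cos ((n : ℝ) * θ) = Real.cos (2 * π * r / b₀) := by
      rw [hnθ, Real.cos_add_int_mul_two_pi]
    -- the angle 2πr/b₀ is within π/b₀ of π, on the left
    have h2r1 : (b₀ : ℝ) - 1 ≤ 2 * (r : ℝ) := by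
      have : (b₀ : ℤ) - 1 ≤ 2 * (r : ℤ) := by omega
      exact_mod_cast this
    have h2r2 : 2 * (r : ℝ) ≤ (b₀ : ℝ) := by
      have : 2 * (r : ℤ) ≤ (b₀ : ℤ) := by omega
      exact_mod_cast this
    have hx1 : π - π / b₀ ≤ 2 * π * r / b₀ := by
      rw [← sub_nonneg]
      have he : 2 * π * r / b₀ - (π - π / b₀) = (π / b₀) * (2 * r - (b₀ - 1)) := by
        field_simp
      rw [he]
      apply mul_nonneg (by positivity)
      linarith
    have hb₀1R : (1:ℝ) ≤ (b₀ : ℝ) := by exact_mod_cast hb₀pos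
    have hx2 : 2 * π * r / b₀ ≤ π := by
      rw [div_le_iff₀ hb₀R]
      nlinarith [mul_le_mul_of_nonneg_left h2r2 hπ.le]
    have hx0 : 0 ≤ π - π / b₀ := by
      rw [sub_nonneg, div_le_iff₀ hb₀R]
      nlinarith [mul_le_mul_of_nonneg_left hb₀1R hπ.le]
    have hmono : Real.cos (2 * π * r / b₀) ≤ Real.cos (π - π / b₀) :=
      Real.cos_le_cos_of_nonneg_of_le_pi hx0 hx2 hx1
    rw [Real.cos_pi_sub] at hmono
    -- get the bound on b₀
    have hchain : -1 + ε ≤ -Real.cos (π / b₀) := by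
      have h5 := hP n hnN
      rw [hcosn] at h5
      linarith
    have hcosb : Real.cos (π / b₀) ≤ 1 - ε := by linarith
    have hsq : 2 * ε ≤ (π / b₀) ^ 2 := by
      have := Real.one_sub_sq_div_two_le_cos (x := π / b₀)
      nlinarith
    have hsqrt : Real.sqrt (2 * ε) ≤ π / b₀ := by
      have h0 : (0:ℝ) ≤ π / b₀ := by positivity
      calc Real.sqrt (2 * ε) ≤ Real.sqrt ((π / b₀) ^ 2) := Real.sqrt_le_sqrt hsq
        _ = π / b₀ := by rw [Real.sqrt_sq h0]
    have hsqrtpos : 0 < Real.sqrt (2 * ε) := Real.sqrt_pos.mpr (by linarith)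
    refine ⟨b₀, hb₀pos, ?_, ?_⟩
    · rw [le_div_iff₀ hsqrtpos]
      rw [le_div_iff₀ hb₀R] at hsqrt
      linarith
    · rw [hk₀]
      exact Real.cos_int_mul_two_pi k₀
  · -- irrational case : contradiction
    exfalso
    set M : ℕ := max N 1 with hMdef
    have hM1 : 1 ≤ M := le_max_right _ _
    set S : AddSubgroup ℝ := AddSubgroup.closure {(M : ℝ) * θ, 2 * π} with hSdef
    have hMθ : (M : ℝ) * θ ∈ S := AddSubgroup.subset_closure (by simp)
    have h2π : 2 * π ∈ S := AddSubgroup.subset_closure (by simp)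
    rcases AddSubgroup.dense_or_cyclic S with hdense | ⟨g, hg⟩
    · -- dense: find a point close to π
      set ρ : ℝ := min (Real.sqrt ε) 1 with hρdef
      have hρ0 : 0 < ρ := lt_min (Real.sqrt_pos.mpr hε) one_pos
      have hρ1 : ρ ≤ 1 := min_le_right _ _
      have hρcos : 1 - ε < Real.cos ρ := by
        have h1 : ρ ^ 2 ≤ ε := by
          calc ρ ^ 2 ≤ Real.sqrt ε ^ 2 := by
                have := min_le_left (Real.sqrt ε) 1
                nlinarith [hρ0]
            _ = ε := Real.sq_sqrt hε.le
        have h2 := Real.one_sub_sq_div_two_le_cos (x := ρ)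
        nlinarith
      obtain ⟨w, hwS, hw⟩ := hdense.exists_between (show π - ρ < π + ρ by linarith)
      have hwS' : w ∈ AddSubgroup.closure {(M : ℝ) * θ, 2 * π} := by
        rw [← hSdef]; exact hwS
      rw [AddSubgroup.mem_closure_pair] at hwS'
      obtain ⟨a, k, haw⟩ := hwS'
      simp only [zsmul_eq_mul] at haw
      have ha0 : a ≠ 0 := by
        rintro rfl
        simp only [Int.cast_zero, zero_mul, zero_add] at haw
        -- w = k * 2π close to π : impossible
        have hk : |(2 * (k:ℝ) - 1)| * π < ρ := by
          have : |w - π| < ρ := abs_sub_lt_iff.mpr ⟨by cases hw; linarith, by cases hw; linarith⟩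
          calc |(2 * (k:ℝ) - 1)| * π = |(2 * (k:ℝ) - 1) * π| := by
                rw [abs_mul, abs_of_pos hπ]
            _ = |w - π| := by rw [← haw]; ring_nf
            _ < ρ := this
        have h1 : (1:ℝ) ≤ |(2 * (k:ℝ) - 1)| := by
          have h2 : (1:ℤ) ≤ |2 * k - 1| := Int.one_le_abs (by omega)
          have h3 : ((1:ℤ):ℝ) ≤ ((|2 * k - 1| : ℤ) : ℝ) := by exact_mod_cast h2
          rw [Int.cast_abs] at h3
          push_cast at h3
          convert h3 using 2 <;> ring
        nlinarith [hπ, hρ1, Real.pi_gt_three]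
      -- n = |a| * M
      set n : ℕ := a.natAbs * M with hndef
      have hnN : N ≤ n := by
        have h1 : 1 ≤ a.natAbs := by omega
        calc N ≤ M := le_max_left _ _
          _ = 1 * M := (one_mul M).symm
          _ ≤ a.natAbs * M := Nat.mul_le_mul_right M h1
      have hcosval : Real.cos ((n : ℝ) * θ) = Real.cos w := by
        have hnR : ((n : ℕ) : ℝ) = (a.natAbs : ℝ) * (M : ℝ) := by
          rw [hndef]; push_cast; ring
        have hAbs : ((a.natAbs : ℕ) : ℝ) = |(a : ℝ)| := by
          rw [Nat.cast_natAbs, Int.cast_abs]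
        rcases abs_choice ((a : ℝ)) with hc | hc
        · have : ((n : ℕ) : ℝ) * θ = w + (-k : ℤ) * (2 * π) := by
            rw [hnR, hAbs, hc]
            push_cast
            linarith [haw]
          rw [this, Real.cos_add_int_mul_two_pi]
        · have : ((n : ℕ) : ℝ) * θ = -(w + (-k : ℤ) * (2 * π)) := by
            rw [hnR, hAbs, hc]
            push_cast
            linarith [haw]
          rw [this, Real.cos_neg, Real.cos_add_int_mul_two_pi]
      have hcosw : Real.cos w ≤ -Real.cos ρ := by
        have h1 : Real.cos (w - π) = -Real.cos w := Real.cos_sub_pi w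
        have h2 : |w - π| < ρ := abs_sub_lt_iff.mpr ⟨by linarith [hw.2], by linarith [hw.1]⟩
        have h3 : Real.cos ρ ≤ Real.cos |w - π| :=
          Real.cos_le_cos_of_nonneg_of_le_pi (abs_nonneg _)
            (by nlinarith [Real.pi_gt_three]) h2.le
        rw [Real.cos_abs] at h3
        linarith
      have := hP n hnN
      rw [hcosval] at this
      linarith
    · -- cyclic case: θ is a rational multiple of 2π after all
      rw [hg] at hMθ h2π
      obtain ⟨u, hu⟩ := AddSubgroup.mem_closure_singleton.mp hMθ
      obtain ⟨v, hv⟩ := AddSubgroup.mem_closure_singleton.mp h2π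
      simp only [zsmul_eq_mul] at hu hv
      have hv0 : v ≠ 0 := by
        rintro rfl
        simp only [Int.cast_zero, zero_mul] at hv
        nlinarith
      apply hrat
      refine ⟨v.natAbs * M, by positivity, ?_⟩
      have hkey : ((v : ℝ) * M) * θ = (u : ℝ) * (2 * π) := by
        calc ((v : ℝ) * M) * θ = (v : ℝ) * ((M : ℝ) * θ) := by ring
          _ = (v : ℝ) * ((u : ℝ) * g) := by rw [hu]
          _ = (u : ℝ) * ((v : ℝ) * g) := by ring
          _ = (u : ℝ) * (2 * π) := by rw [hv]
      have hAbs : ((v.natAbs : ℕ) : ℝ) = |(v : ℝ)| := by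
        rw [Nat.cast_natAbs, Int.cast_abs]
      rcases abs_choice ((v : ℝ)) with hc | hc
      · refine ⟨u, ?_⟩
        push_cast
        rw [hAbs, hc]
        linarith [hkey]
      · refine ⟨-u, ?_⟩
        push_cast
        rw [hAbs, hc]
        linarith [hkey]

end CosAux5

namespace CosAux6
open Real CosAux4 CosAux5

/-- Scalar case: a complex-valued cosine family with eventual bound `< 2` is trivial. -/
lemma scalar_one (c : ℝ → ℂ) (hC0 : c 0 = 1)
    (hC : ∀ s t : ℝ, c (t + s) + c (t - s) = 2 * (c t * c s))
    {T L' : ℝ} (hL2 : L' < 2) (hbound : ∀ t ≥ T, ‖c t - 1‖ ≤ L') :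
    ∀ t : ℝ, c t = 1 := by
  have hL0 : 0 ≤ L' := le_trans (norm_nonneg _) (hbound T le_rfl)
  set ε : ℝ := 2 - L' with hεdef
  have hε : 0 < ε := by linarith
  set B : ℕ := Nat.ceil (π / Real.sqrt (2*ε)) with hBdef
  set M : ℕ := B.factorial with hMdef
  have hM0 : 0 < M := Nat.factorial_pos B
  have hM0R : (0:ℝ) < (M:ℝ) := by exact_mod_cast hM0
  have heven : ∀ s : ℝ, c (-s) = c s := by
    intro s
    have h1 := hC s 0
    rw [zero_add, zero_sub, hC0] at h1
    linear_combination h1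
  have hpos : ∀ t₀ : ℝ, 0 < t₀ → c t₀ = 1 := by
    intro t₀ ht₀
    set u : ℝ := t₀ / M with hudef
    have hu : 0 < u := by positivity
    obtain ⟨θ, hθ⟩ := exists_theta c hC0 hC hbound hu
    set N : ℕ := Nat.ceil (T / u) with hNdef
    have hP : ∀ n : ℕ, N ≤ n → -1 + ε ≤ Real.cos ((n : ℝ) * θ) := by
      intro n hn
      have hTn : T ≤ (n : ℝ) * u := by
        have h1 : T / u ≤ (N : ℝ) := Nat.le_ceil _
        have h2 : (N : ℝ) ≤ (n : ℝ) := by exact_mod_cast hn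
        rw [div_le_iff₀ hu] at h1
        nlinarith
      have h3 := hbound _ hTn
      rw [hθ n] at h3
      rw [show ((Real.cos ((n:ℝ) * θ) : ℝ) : ℂ) - 1 = ((Real.cos ((n:ℝ) * θ) - 1 : ℝ) : ℂ) by
        push_cast; ring] at h3
      rw [Complex.norm_real] at h3
      have h4 := abs_le.mp h3
      linarith [h4.1]
    obtain ⟨b, hb0, hbB, hcosb⟩ := lemR hε θ N hP
    have hbBnat : b ≤ B := by
      have h1 : (b : ℝ) ≤ (B : ℝ) := le_trans hbB (Nat.le_ceil _)
      exact_mod_cast h1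
    have hbv : c ((b : ℝ) * u) = 1 := by rw [hθ b, hcosb]; norm_num
    set v : ℝ := (b : ℝ) * u with hvdef
    have hv : 0 < v := by positivity
    obtain ⟨θ', hθ'⟩ := exists_theta c hC0 hC hbound hv
    have hcosθ' : Real.cos θ' = 1 := by
      have h1 := hθ' 1
      rw [Nat.cast_one, one_mul, one_mul, hbv] at h1
      exact_mod_cast h1.symm
    obtain ⟨k, hk⟩ := (Real.cos_eq_one_iff θ').mp hcosθ'
    have hdvd : b ∣ M := hMdef ▸ Nat.dvd_factorial hb0 hbBnat
    set m : ℕ := M / b with hmdef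
    have hmb : m * b = M := Nat.div_mul_cancel hdvd
    have hall : c ((m : ℝ) * v) = 1 := by
      rw [hθ' m, ← hk,
        show (m : ℝ) * ((k : ℝ) * (2 * π)) = ((m * k : ℤ) : ℝ) * (2 * π) by push_cast; ring,
        Real.cos_int_mul_two_pi]
      norm_num
    have hmv : (m : ℝ) * v = t₀ := by
      have h1 : ((m * b : ℕ) : ℝ) = (M : ℝ) := by exact_mod_cast congrArg (Nat.cast (R := ℝ)) hmb
      push_cast at h1
      rw [hvdef, hudef]
      field_simp
      nlinarith [h1]
    rwa [hmv] at hall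
  intro t
  rcases lt_trichotomy t 0 with ht | ht | ht
  · have h1 := heven (-t)
    rw [neg_neg] at h1
    rw [h1]
    exact hpos (-t) (by linarith)
  · rw [ht, hC0]
  · exact hpos t ht

end CosAux6

section Main
open scoped ENNReal
open Filter WeakDual CosAux6

variable {A : Type*} [NormedRing A] [NormedAlgebra ℂ A] [NormOneClass A] [CompleteSpace A]

private lemma cancel_two' (x y : A) (h : 2 * x = 2 * y) : x = y := by
  have h2 : (2:ℂ) • x = (2:ℂ) • y := by
    rw [two_smul, two_smul, ← two_mul, ← two_mul, h]
  calc x = (2:ℂ)⁻¹ • ((2:ℂ) • x) := by rw [smul_smul]; norm_num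
    _ = (2:ℂ)⁻¹ • ((2:ℂ) • y) := by rw [h2]
    _ = y := by rw [smul_smul]; norm_num

theorem cosine_limsup_spectralRadius_aux (C : ℝ → A)
    (hC0 : C 0 = 1)
    (hC : ∀ s t : ℝ, C (t + s) + C (t - s) = 2 * (C t * C s))
    (h : Filter.limsup (fun t : ℝ => spectralRadius ℂ (C t - 1)) Filter.atTop < 2) :
    ∀ t : ℝ, spectralRadius ℂ (C t - 1) = 0 := by
  classical
  have heven : ∀ s : ℝ, C (-s) = C s := by
    intro s
    have h1 := hC s 0
    rw [zero_add, zero_sub, hC0, one_mul, two_mul] at h1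
    exact add_left_cancel h1
  have hcomm : ∀ s t : ℝ, C s * C t = C t * C s := by
    intro s t
    apply cancel_two'
    have h1 := hC s t
    have h2 := hC t s
    rw [add_comm t s] at h1
    rw [show s - t = -(t - s) by ring, heven] at h2
    rw [← h1, ← h2]
  set S : Subalgebra ℂ A := Algebra.adjoin ℂ (Set.range C) with hSdef
  have hScomm : ∀ x y : S, x * y = y * x := by
    letI : CommRing S := Algebra.adjoinCommRingOfComm ℂ (fun a ha b hb => by
      obtain ⟨s, rfl⟩ := ha
      obtain ⟨t, rfl⟩ := hb
      exact hcomm s t)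
    exact fun x y => mul_comm x y
  set Bc : Subalgebra ℂ A := S.topologicalClosure with hBdef
  have hBcomm : ∀ x y : Bc, x * y = y * x := by
    letI : CommRing Bc := S.commRingTopologicalClosure hScomm
    exact fun x y => mul_comm x y
  letI : NormedCommRing Bc := { (inferInstance : NormedRing Bc) with mul_comm := hBcomm }
  letI : CompleteSpace Bc := (Subalgebra.isClosed_topologicalClosure S).completeSpace_coe
  have hmem : ∀ s : ℝ, C s ∈ Bc := fun s =>
    S.le_topologicalClosure (Algebra.subset_adjoin ⟨s, rfl⟩)
  set Cb : ℝ → Bc := fun s => ⟨C s, hmem s⟩ with hCbdef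
  -- spectral radius is the same computed in `Bc` or `A`
  have hradius : ∀ x : Bc, spectralRadius ℂ (x : A) = spectralRadius ℂ x := by
    intro x
    have h1 := spectrum.pow_nnnorm_pow_one_div_tendsto_nhds_spectralRadius (x : A)
    have h2 := spectrum.pow_nnnorm_pow_one_div_tendsto_nhds_spectralRadius x
    refine tendsto_nhds_unique ?_ h2
    have hfun : (fun n : ℕ => (‖x ^ n‖₊ : ℝ≥0∞) ^ (1/(n:ℝ))) =
        fun n : ℕ => (‖(x : A) ^ n‖₊ : ℝ≥0∞) ^ (1/(n:ℝ)) := by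
      funext n
      have hcoe : ((x ^ n : Bc) : A) = (x : A) ^ n := by push_cast; ring
      have : ‖x ^ n‖₊ = ‖(x : A) ^ n‖₊ := by rw [← hcoe]; rfl
      rw [this]
    rw [hfun]
    exact h1
  -- extract an eventual bound strictly below 2
  obtain ⟨l, hl1, hl2⟩ := exists_between h
  have hev : ∀ᶠ t in atTop, spectralRadius ℂ (C t - 1) < l :=
    Filter.eventually_lt_of_limsup_lt hl1
  obtain ⟨T, hT⟩ := Filter.eventually_atTop.mp hev
  have hlne : l ≠ ⊤ := hl2.ne_top
  set L' : ℝ := l.toReal with hL'def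
  have hL2 : L' < 2 := by
    have h3 : l.toReal < (2:ℝ≥0∞).toReal :=
      (ENNReal.toReal_lt_toReal hlne (by norm_num)).mpr hl2
    simpa using h3
  -- every character of `Bc` kills `C t - 1`
  have hone : ∀ (φ : characterSpace ℂ Bc) (s : ℝ), φ (Cb s) = 1 := by
    intro φ
    set c : ℝ → ℂ := fun s => φ (Cb s) with hcdef
    have hc0 : c 0 = 1 := by
      have : Cb 0 = 1 := Subtype.ext (by show C 0 = ((1 : Bc) : A); simpa using hC0)
      rw [hcdef]; simp only [this, map_one]
    have hcd : ∀ s t : ℝ, c (t + s) + c (t - s) = 2 * (c t * c s) := by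
      intro s t
      have hBeq : Cb (t + s) + Cb (t - s) = 2 * (Cb t * Cb s) := by
        apply Subtype.ext
        push_cast
        exact hC s t
      have := congrArg φ hBeq
      rw [map_add, map_mul, map_ofNat, map_mul] at this
      exact this
    have hcb : ∀ t ≥ T, ‖c t - 1‖ ≤ L' := by
      intro t ht
      have hsub : c t - 1 = φ (Cb t - 1) := by rw [map_sub, map_one]
      have hmemσ : φ (Cb t - 1) ∈ spectrum ℂ (Cb t - 1) := AlgHom.apply_mem_spectrum φ _
      have hle : (‖φ (Cb t - 1)‖₊ : ℝ≥0∞) ≤ spectralRadius ℂ (Cb t - 1) :=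
        le_iSup₂ (f := fun k (_ : k ∈ spectrum ℂ (Cb t - 1)) => (‖k‖₊ : ℝ≥0∞)) _ hmemσ
      have hcoeB : ((Cb t - 1 : Bc) : A) = C t - 1 := by push_cast; rfl
      rw [← hradius, hcoeB] at hle
      have hlt := lt_of_le_of_lt hle (hT t ht)
      rw [hsub]
      have := ENNReal.toReal_mono hlne hlt.le
      simpa using this
    exact fun s => scalar_one c hc0 hcd hL2 hcb s
  intro t
  have hcoeB : ((Cb t - 1 : Bc) : A) = C t - 1 := by push_cast; rfl
  rw [← hcoeB, hradius (Cb t - 1)]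
  apply le_antisymm _ zero_le
  have hσ : ∀ z ∈ spectrum ℂ (Cb t - 1), z = 0 := by
    intro z hz
    obtain ⟨φ, hφ⟩ := WeakDual.CharacterSpace.mem_spectrum_iff_exists.mp hz
    rw [← hφ, map_sub, map_one, hone φ t, sub_self]
  calc spectralRadius ℂ (Cb t - 1) = ⨆ k ∈ spectrum ℂ (Cb t - 1), (‖k‖₊ : ℝ≥0∞) := rfl
    _ ≤ 0 := by
        refine iSup₂_le fun k hk => ?_
        rw [hσ k hk]
        simp

end Main


/-- If `C : ℝ → A` is a cosine family in a unital complex Banach algebra `A`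
and `limsup_{t → ∞} ρ(C t - 1) < 2` for the spectral radius `ρ`, then
`ρ(C t - 1) = 0` for all `t`. -/
theorem cosine_limsup_spectralRadius {A : Type*} [NormedRing A] [NormedAlgebra ℂ A]
    [NormOneClass A] [CompleteSpace A] (C : ℝ → A)
    (hC0 : C 0 = 1)
    (hC : ∀ s t : ℝ, C (t + s) + C (t - s) = 2 * (C t * C s))
    (h : Filter.limsup (fun t : ℝ => spectralRadius ℂ (C t - 1)) Filter.atTop < 2) :
    ∀ t : ℝ, spectralRadius ℂ (C t - 1) = 0 :=
  cosine_limsup_spectralRadius_aux C hC0 hC h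
end

section
/- Let A be a unital complex Banach algebra and let C : ℝ → A be a cosine family, i.e. C(0) = 1 and C(t+s) + C(t−s) = 2·C(t)·C(s) for all s, t ∈ ℝ. Assume that ρ(C(t) − 1) = 0 for all t ∈ ℝ, where ρ is the spectral radius, and that ‖C(2s) − 1‖ ≤ 2 for some s ∈ ℝ. Then ‖1 − C(s)‖ ≤ 1 − √(1 − ‖1 − C(2s)‖/2) ≤ 1. -/
open scoped ENNReal

section Aux
open Filter Finset



noncomputable def cosCoef : ℕ → ℝ
  | 0 => 0
  | 1 => 1/2
  | n+2 => (1/2) * ∑ k ∈ (Finset.range (n+1)).attach, cosCoef (k+1) * cosCoef (n+1-k)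
decreasing_by
  · have := Finset.mem_range.mp k.2; omega
  · have := Finset.mem_range.mp k.2; omega

lemma cosCoef_zero : cosCoef 0 = 0 := by simp [cosCoef]
lemma cosCoef_one : cosCoef 1 = 1/2 := by simp [cosCoef]

lemma cosCoef_add_two (n : ℕ) :
    cosCoef (n+2) = (1/2) * ∑ k ∈ Finset.range (n+1), cosCoef (k+1) * cosCoef (n+1-k) := by
  rw [cosCoef, Finset.sum_attach (Finset.range (n+1)) (fun k => cosCoef (k+1) * cosCoef (n+1-k))]

lemma cosCoef_nonneg : ∀ n, 0 ≤ cosCoef n := by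
  intro n
  induction n using Nat.strong_induction_on with
  | _ n ih =>
    match n with
    | 0 => simp [cosCoef_zero]
    | 1 => norm_num [cosCoef_one]
    | n+2 =>
      rw [cosCoef_add_two]
      apply mul_nonneg (by norm_num)
      apply Finset.sum_nonneg
      intro k hk
      have hk := Finset.mem_range.mp hk
      exact mul_nonneg (ih _ (by omega)) (ih _ (by omega))

/-- convolution identity -/
lemma cosCoef_conv (n : ℕ) :
    ∑ p ∈ Finset.HasAntidiagonal.antidiagonal n, cosCoef p.1 * cosCoef p.2
      = 2 * cosCoef n - (if n = 1 then 1 else 0) := by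
  match n with
  | 0 => simp [cosCoef_zero]
  | 1 => simp [Finset.Nat.antidiagonal_succ, cosCoef_zero, cosCoef_one]
  | n+2 =>
    rw [Finset.Nat.sum_antidiagonal_eq_sum_range_succ_mk]
    rw [Finset.sum_range_succ]  -- peel k = n+2 : cosCoef (n+2) * cosCoef 0
    rw [Finset.sum_range_succ'] -- peel k = 0
    rw [cosCoef_add_two]
    simp only [Nat.sub_self, Nat.sub_zero, cosCoef_zero, mul_zero, zero_mul, add_zero, zero_add]
    rw [if_neg (by omega), ← mul_assoc]
    norm_num
    apply Finset.sum_congr rfl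
    intro k hk
    congr 2
    omega


lemma cosCoef_sum_le_one : ∀ N, ∑ n ∈ Finset.range N, cosCoef n ≤ 1 := by
  intro N
  induction N using Nat.strong_induction_on with
  | _ N ih =>
    match N with
    | 0 => simp
    | 1 => simp [cosCoef_zero]
    | N+2 =>
      have key : ∑ n ∈ Finset.range N, (∑ k ∈ Finset.range (n+1),
            cosCoef (k+1) * cosCoef (n+1-k))
          ≤ (∑ j ∈ Finset.range (N+1), cosCoef j) ^ 2 := by
        rw [sq, Finset.sum_mul_sum, ← Finset.sum_product']
        rw [Finset.sum_sigma']
        set e : (Σ _n : ℕ, ℕ) → ℕ × ℕ := fun p => (p.2 + 1, p.1 + 1 - p.2) with he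
        have hinj : ∀ p ∈ (Finset.range N).sigma (fun n => Finset.range (n+1)),
            ∀ q ∈ (Finset.range N).sigma (fun n => Finset.range (n+1)), e p = e q → p = q := by
          rintro ⟨n, k⟩ hp ⟨m, l⟩ hq hpq
          simp only [Finset.mem_sigma, Finset.mem_range] at hp hq
          simp only [he, Prod.mk.injEq] at hpq
          have : k = l := by omega
          subst this
          have : n = m := by omega
          subst this
          rfl
        have himg : ∑ p ∈ ((Finset.range N).sigma (fun n => Finset.range (n+1))).image e,
              cosCoef p.1 * cosCoef p.2
            = ∑ p ∈ (Finset.range N).sigma (fun n => Finset.range (n+1)),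
              cosCoef (p.2+1) * cosCoef (p.1+1-p.2) := by
          rw [Finset.sum_image hinj]
        rw [← himg]
        apply Finset.sum_le_sum_of_subset_of_nonneg
        · intro p hp
          simp only [Finset.mem_image] at hp
          obtain ⟨q, hmem, rfl⟩ := hp
          obtain ⟨n, k⟩ := q
          simp only [Finset.mem_sigma, Finset.mem_range] at hmem
          show (k + 1, n + 1 - k) ∈ Finset.range (N+1) ×ˢ Finset.range (N+1)
          simp only [Finset.mem_product, Finset.mem_range]
          omega
        · intro p _ _
          exact mul_nonneg (cosCoef_nonneg _) (cosCoef_nonneg _)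
      have hexp : ∑ n ∈ Finset.range (N+2), cosCoef n
          = 1/2 + (1/2) * ∑ n ∈ Finset.range N, (∑ k ∈ Finset.range (n+1),
              cosCoef (k+1) * cosCoef (n+1-k)) := by
        rw [Finset.sum_range_succ', Finset.sum_range_succ']
        simp only [cosCoef_zero, cosCoef_one, add_zero]
        rw [Finset.mul_sum]
        rw [Finset.sum_congr rfl (fun n _ => (cosCoef_add_two n))]
        rw [cosCoef_one]
        ring
      rw [hexp]
      have h1 := ih (N+1) (by omega)
      nlinarith [key, Finset.sum_nonneg (fun n (_ : n ∈ Finset.range (N+1)) => cosCoef_nonneg n)]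

lemma cosCoef_summable : Summable cosCoef :=
  summable_of_sum_range_le cosCoef_nonneg cosCoef_sum_le_one

lemma cosCoef_tsum_le_one : ∑' n, cosCoef n ≤ 1 :=
  Real.tsum_le_of_sum_range_le cosCoef_nonneg cosCoef_sum_le_one

section real
variable {t : ℝ} (ht0 : 0 ≤ t) (ht1 : t ≤ 1)

include ht0 ht1 in
lemma cosCoef_summable_pow : Summable (fun n => cosCoef n * t^n) := by
  apply Summable.of_nonneg_of_le
    (fun n => mul_nonneg (cosCoef_nonneg n) (pow_nonneg ht0 n))
    (fun n => ?_) cosCoef_summable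
  calc cosCoef n * t^n ≤ cosCoef n * 1 := by
        apply mul_le_mul_of_nonneg_left (pow_le_one₀ ht0 ht1) (cosCoef_nonneg n)
    _ = cosCoef n := mul_one _

include ht0 ht1 in
lemma cosCoef_tsum_eq : ∑' n, cosCoef n * t^n = 1 - Real.sqrt (1 - t) := by
  set g := ∑' n, cosCoef n * t^n with hg
  have hsum := cosCoef_summable_pow ht0 ht1
  have hnn : ∀ n, 0 ≤ cosCoef n * t^n :=
    fun n => mul_nonneg (cosCoef_nonneg n) (pow_nonneg ht0 n)
  have hnormsum : Summable (fun n => ‖cosCoef n * t^n‖) := by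
    apply hsum.congr
    intro n
    exact (Real.norm_of_nonneg (hnn n)).symm
  have hg1 : g ≤ 1 := by
    refine le_trans (Summable.tsum_le_tsum (fun n => ?_) hsum cosCoef_summable) cosCoef_tsum_le_one
    calc cosCoef n * t^n ≤ cosCoef n * 1 := by
          apply mul_le_mul_of_nonneg_left (pow_le_one₀ ht0 ht1) (cosCoef_nonneg n)
      _ = cosCoef n := mul_one _
  have hcauchy : g * g = 2 * g - t := by
    rw [hg, tsum_mul_tsum_eq_tsum_sum_antidiagonal_of_summable_norm hnormsum hnormsum]
    have hterm : ∀ n : ℕ, ∑ kl ∈ Finset.HasAntidiagonal.antidiagonal n,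
        (cosCoef kl.1 * t^kl.1) * (cosCoef kl.2 * t^kl.2)
        = 2 * (cosCoef n * t^n) - (if n = 1 then t else 0) := by
      intro n
      have : ∀ kl ∈ Finset.HasAntidiagonal.antidiagonal n,
          (cosCoef kl.1 * t^kl.1) * (cosCoef kl.2 * t^kl.2)
          = (cosCoef kl.1 * cosCoef kl.2) * t^n := by
        intro kl hkl
        rw [Finset.HasAntidiagonal.mem_antidiagonal] at hkl
        rw [← hkl, pow_add]
        ring
      rw [Finset.sum_congr rfl this, ← Finset.sum_mul, cosCoef_conv]
      split_ifs with h
      · subst h; ring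
      · ring
    rw [tsum_congr hterm]
    rw [Summable.tsum_sub (hsum.mul_left 2) (hasSum_ite_eq 1 t).summable]
    rw [tsum_mul_left, (hasSum_ite_eq 1 t).tsum_eq]
  have hfact : (1 - g)^2 = 1 - t := by ring_nf; nlinarith [hcauchy]
  have h1g : 0 ≤ 1 - g := by linarith
  have : Real.sqrt (1 - t) = 1 - g := by
    rw [← hfact, Real.sqrt_sq h1g]
  linarith [this]

end real



lemma pow_norm_bound {A : Type*} [NormedRing A] [NormedAlgebra ℂ A] [CompleteSpace A]
    (b : A) (hb : spectralRadius ℂ b = 0) :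
    ∃ M : ℝ, 1 ≤ M ∧ ∀ n, ‖b ^ n‖ ≤ M * (1/2) ^ n := by
  have hG := spectrum.pow_nnnorm_pow_one_div_tendsto_nhds_spectralRadius b
  rw [hb] at hG
  have hev : ∀ᶠ n : ℕ in atTop, (‖b ^ n‖₊ : ENNReal) ^ (1/(n:ℝ)) < (1/2 : ENNReal) :=
    hG.eventually_lt_const (by norm_num)
  obtain ⟨N, hN⟩ := eventually_atTop.mp hev
  have hsmall : ∀ n, N + 1 ≤ n → ‖b ^ n‖ ≤ (1/2) ^ n := by
    intro n hn
    have hn0 : 0 < n := by omega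
    have h1 := hN n (by omega)
    have hcoe : ((‖b ^ n‖₊ ^ (1/(n:ℝ)) : NNReal) : ENNReal) = (‖b ^ n‖₊ : ENNReal) ^ (1/(n:ℝ)) := by
      rw [ENNReal.coe_rpow_of_nonneg _ (by positivity)]
    rw [← hcoe] at h1
    have h2 : (‖b ^ n‖₊ ^ (1/(n:ℝ)) : NNReal) < (1/2 : NNReal) := by
      have hhalf : ((1/2 : NNReal) : ENNReal) = (1/2 : ENNReal) := by
        simp [ENNReal.coe_div]
      rw [← hhalf] at h1
      exact ENNReal.coe_lt_coe.mp h1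
    have h3 : (‖b ^ n‖ : ℝ) ^ (1/(n:ℝ)) ≤ 1/2 := by
      have := (NNReal.coe_lt_coe.mpr h2).le
      simpa [NNReal.coe_rpow] using this
    have h4 : ((‖b ^ n‖ : ℝ) ^ (1/(n:ℝ))) ^ (n : ℕ) ≤ (1/2 : ℝ) ^ n :=
      pow_le_pow_left₀ (Real.rpow_nonneg (norm_nonneg _) _) h3 n
    calc ‖b ^ n‖ = ((‖b ^ n‖ : ℝ) ^ (1/(n:ℝ))) ^ (n : ℕ) := by
          rw [← Real.rpow_natCast ((‖b ^ n‖ : ℝ) ^ (1/(n:ℝ))), ← Real.rpow_mul (norm_nonneg _)]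
          rw [one_div, inv_mul_cancel₀ (by exact_mod_cast hn0.ne')]
          exact (Real.rpow_one _).symm
      _ ≤ (1/2) ^ n := h4
  refine ⟨(∑ k ∈ Finset.range (N+1), ‖b ^ k‖ * 2 ^ k) + 1, ?_, ?_⟩
  · have : 0 ≤ ∑ k ∈ Finset.range (N+1), ‖b ^ k‖ * 2 ^ k :=
      Finset.sum_nonneg fun k _ => mul_nonneg (norm_nonneg _) (by positivity)
    linarith
  · intro n
    by_cases hn : N + 1 ≤ n
    · have := hsmall n hn
      have hM : (1:ℝ) ≤ (∑ k ∈ Finset.range (N+1), ‖b ^ k‖ * 2 ^ k) + 1 := by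
        have : 0 ≤ ∑ k ∈ Finset.range (N+1), ‖b ^ k‖ * 2 ^ k :=
          Finset.sum_nonneg fun k _ => mul_nonneg (norm_nonneg _) (by positivity)
        linarith
      calc ‖b ^ n‖ ≤ (1/2) ^ n := this
        _ ≤ ((∑ k ∈ Finset.range (N+1), ‖b ^ k‖ * 2 ^ k) + 1) * (1/2) ^ n := by
            nlinarith [pow_pos (by norm_num : (0:ℝ) < 1/2) n]
    · push_neg at hn
      have hmem : n ∈ Finset.range (N+1) := Finset.mem_range.mpr (by omega)
      have hsingle : ‖b ^ n‖ * 2 ^ n ≤ ∑ k ∈ Finset.range (N+1), ‖b ^ k‖ * 2 ^ k :=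
        Finset.single_le_sum (fun k _ => mul_nonneg (norm_nonneg _) (by positivity)) hmem
      have h2n : (0:ℝ) < 2 ^ n := by positivity
      have : ‖b ^ n‖ = (‖b ^ n‖ * 2 ^ n) * (1/2) ^ n := by
        rw [mul_assoc, ← mul_pow]
        norm_num
      rw [this]
      apply mul_le_mul_of_nonneg_right _ (by positivity)
      linarith



lemma isUnit_two_sub {A : Type*} [NormedRing A] [NormedAlgebra ℂ A] [NormOneClass A]
    [CompleteSpace A] (z : A) (M : ℝ) (hM : 1 ≤ M) (hz : ∀ n, ‖z ^ n‖ ≤ M * (7/4) ^ n) :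
    IsUnit ((2 : A) - z) := by
  obtain ⟨k, hk⟩ := pow_unbounded_of_one_lt M (by norm_num : (1:ℝ) < 8/7)
  have hlt : ‖z ^ (k+1)‖ < 2 ^ (k+1) := by
    have h1 : M < (8/7 : ℝ) ^ (k+1) :=
      hk.trans_le (pow_le_pow_right₀ (by norm_num) (by omega))
    have h2 : ‖z ^ (k+1)‖ ≤ M * (7/4) ^ (k+1) := hz (k+1)
    have h3 : M * (7/4 : ℝ) ^ (k+1) < (8/7) ^ (k+1) * (7/4) ^ (k+1) := by
      have : (0:ℝ) < (7/4) ^ (k+1) := by positivity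
      nlinarith
    have h4 : ((8/7 : ℝ)) ^ (k+1) * (7/4) ^ (k+1) = 2 ^ (k+1) := by
      rw [← mul_pow]; norm_num
    linarith
  have hsr : spectralRadius ℂ z < 2 := by
    have hb := spectrum.spectralRadius_le_pow_nnnorm_pow_one_div ℂ z k
    have hone : (‖(1:A)‖₊ : ℝ≥0∞) = 1 := by simp
    rw [hone, ENNReal.one_rpow, mul_one] at hb
    refine lt_of_le_of_lt hb ?_
    have hcoe : (‖z ^ (k+1)‖₊ : ℝ≥0∞) < (2:ℝ≥0∞) ^ (k+1) := by
      rw [show ((2:ℝ≥0∞) ^ (k+1)) = ((2^(k+1) : NNReal) : ℝ≥0∞) by simp]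
      rw [ENNReal.coe_lt_coe]
      have : (‖z ^ (k+1)‖₊ : ℝ) < ((2:NNReal) ^ (k+1) : NNReal) := by
        simpa [coe_nnnorm] using hlt
      exact_mod_cast this
    calc (‖z ^ (k+1)‖₊ : ℝ≥0∞) ^ (1/(k+1:ℝ))
        < ((2:ℝ≥0∞) ^ (k+1)) ^ (1/(k+1:ℝ)) := by
          apply ENNReal.rpow_lt_rpow hcoe (by positivity)
      _ = 2 := by
          rw [← ENNReal.rpow_natCast 2 (k+1), ← ENNReal.rpow_mul]
          rw [mul_one_div]
          rw [show ((k+1 : ℕ) : ℝ) / ((k:ℝ)+1) = 1 by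
            push_cast
            exact div_self (by positivity)]
          exact ENNReal.rpow_one 2
  have h2mem : (2 : ℂ) ∉ spectrum ℂ z := by
    intro hmem
    have hle : (‖(2:ℂ)‖₊ : ℝ≥0∞) ≤ spectralRadius ℂ z :=
      le_iSup₂ (f := fun k (_ : k ∈ spectrum ℂ z) => (‖k‖₊ : ℝ≥0∞)) (2:ℂ) hmem
    have : (‖(2:ℂ)‖₊ : ℝ≥0∞) = 2 := by
      simp
    rw [this] at hle
    exact (lt_irrefl _ (lt_of_le_of_lt hle hsr)).elim
  have := spectrum.notMem_iff.mp h2mem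
  rw [show (algebraMap ℂ A) 2 = (2:A) by simp [map_ofNat]] at this
  exact this



lemma quasinil_bound {A : Type*} [NormedRing A] [NormedAlgebra ℂ A] [NormOneClass A]
    [CompleteSpace A] (a : A) (ha : spectralRadius ℂ (-a) = 0)
    (hx1 : ‖a + a - a * a‖ ≤ 1) :
    ‖a‖ ≤ 1 - Real.sqrt (1 - ‖a + a - a * a‖) := by
  set x : A := a + a - a * a with hxdef
  set t : ℝ := ‖x‖ with htdef
  have ht0 : 0 ≤ t := norm_nonneg _
  have ht1 : t ≤ 1 := hx1
  -- the series
  set f : ℕ → A := fun n => (cosCoef n : ℂ) • x ^ n with hfdef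
  have hxpow : ∀ n, ‖x ^ n‖ ≤ t ^ n := fun n => norm_pow_le x n
  have hnormf : ∀ n, ‖f n‖ ≤ cosCoef n * t ^ n := by
    intro n
    rw [hfdef]
    simp only [norm_smul, Complex.norm_real, Real.norm_eq_abs,
      abs_of_nonneg (cosCoef_nonneg n)]
    exact mul_le_mul_of_nonneg_left (hxpow n) (cosCoef_nonneg n)
  have hns : Summable (fun n => ‖f n‖) :=
    Summable.of_nonneg_of_le (fun n => norm_nonneg _) hnormf (cosCoef_summable_pow ht0 ht1)
  have hsf : Summable f := hns.of_norm
  set w : A := ∑' n, f n with hwdef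
  have hwnorm : ‖w‖ ≤ 1 - Real.sqrt (1 - t) := by
    calc ‖w‖ ≤ ∑' n, ‖f n‖ := norm_tsum_le_tsum_norm hns
      _ ≤ ∑' n, cosCoef n * t ^ n :=
        Summable.tsum_le_tsum hnormf hns (cosCoef_summable_pow ht0 ht1)
      _ = 1 - Real.sqrt (1 - t) := cosCoef_tsum_eq ht0 ht1
  have hax : Commute a x := by
    rw [hxdef]
    exact ((Commute.refl a).add_right (Commute.refl a)).sub_right
      ((Commute.refl a).mul_right (Commute.refl a))
  have hcommaw : Commute a w :=
    Commute.tsum_right a (fun n => ((hax.pow_right n).smul_right _))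
  -- Cauchy product : w * w = w + w - x
  have hww : w * w = w + w - x := by
    rw [hwdef, tsum_mul_tsum_eq_tsum_sum_antidiagonal_of_summable_norm hns hns]
    have hterm : ∀ n : ℕ, ∑ kl ∈ Finset.HasAntidiagonal.antidiagonal n, f kl.1 * f kl.2
        = (2:ℂ) • f n - (if n = 1 then x else 0) := by
      intro n
      have h1 : ∀ kl ∈ Finset.HasAntidiagonal.antidiagonal n,
          f kl.1 * f kl.2 = ((cosCoef kl.1 * cosCoef kl.2 : ℝ) : ℂ) • x ^ n := by
        intro kl hkl
        rw [Finset.HasAntidiagonal.mem_antidiagonal] at hkl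
        rw [hfdef]
        dsimp only
        rw [smul_mul_smul_comm, ← pow_add, hkl]
        norm_cast
      rw [Finset.sum_congr rfl h1, ← Finset.sum_smul]
      rw [show (∑ kl ∈ Finset.HasAntidiagonal.antidiagonal n, ((cosCoef kl.1 * cosCoef kl.2 : ℝ) : ℂ))
          = ((∑ kl ∈ Finset.HasAntidiagonal.antidiagonal n, cosCoef kl.1 * cosCoef kl.2 : ℝ) : ℂ) by
        push_cast; rfl]
      rw [cosCoef_conv n, Complex.ofReal_sub, sub_smul]
      congr 1
      · rw [Complex.ofReal_mul, mul_smul, hfdef]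
        norm_num
      · split_ifs with h
        · subst h; rw [Complex.ofReal_one, pow_one, one_smul]
        · rw [Complex.ofReal_zero, zero_smul]
    rw [tsum_congr hterm]
    rw [Summable.tsum_sub ((hsf.const_smul (2:ℂ))) ((hasSum_ite_eq 1 x).summable)]
    rw [Summable.tsum_const_smul (2:ℂ) hsf, (hasSum_ite_eq 1 x).tsum_eq]
    rw [← hwdef, two_smul]
  -- a - w is annihilated by a unit
  have hkey : ((a + w) - 2) * (a - w) = 0 := by
    have h1 : a * a - w * w = (a + w) * (a - w) := hcommaw.mul_self_sub_mul_self_eq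
    have h2 : x = w + w - w * w := by rw [hww]; abel
    have h3 : a + a - a * a = w + w - w * w := by rw [← h2]
    have h4 : a * a - w * w = (a - w) + (a - w) := by
      have := h3
      abel_nf at this ⊢
      linear_combination (norm := abel_nf) -this
    rw [sub_mul, ← h1, h4, two_mul]
    abel
  -- invertibility
  obtain ⟨M, hM1, hMa⟩ := pow_norm_bound (-a) ha
  have hapow : ∀ n, ‖a ^ n‖ ≤ M * (1/2) ^ n := by
    intro n
    have : ‖a ^ n‖ = ‖(-a) ^ n‖ := by
      rcases Nat.even_or_odd n with h | h
      · rw [h.neg_pow]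
      · rw [h.neg_pow, norm_neg]
    rw [this]; exact hMa n
  have hw1 : ‖w‖ ≤ 1 := le_trans hwnorm (by
    have := Real.sqrt_nonneg (1 - t); linarith)
  have hzpow : ∀ n, ‖(a + w) ^ n‖ ≤ M * (7/4) ^ n := by
    intro n
    have hbinom := hcommaw.add_pow n
    calc ‖(a + w) ^ n‖
        ≤ ∑ k ∈ Finset.range (n+1), ‖a ^ k * w ^ (n - k) * (n.choose k : A)‖ := by
          rw [hbinom]; exact norm_sum_le _ _
      _ ≤ ∑ k ∈ Finset.range (n+1), M * (1/2) ^ k * (n.choose k : ℝ) := by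
          apply Finset.sum_le_sum
          intro k _
          calc ‖a ^ k * w ^ (n - k) * (n.choose k : A)‖
              ≤ ‖a ^ k * w ^ (n - k)‖ * ‖(n.choose k : A)‖ := norm_mul_le _ _
            _ ≤ (‖a ^ k‖ * ‖w ^ (n - k)‖) * ((n.choose k : ℝ) * ‖(1:A)‖) := by
                apply mul_le_mul (norm_mul_le _ _) (Nat.norm_cast_le _) (norm_nonneg _)
                  (mul_nonneg (norm_nonneg _) (norm_nonneg _))
            _ ≤ (M * (1/2) ^ k * 1) * ((n.choose k : ℝ) * 1) := by
                rw [norm_one]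
                apply mul_le_mul _ le_rfl (by positivity) (by positivity)
                apply mul_le_mul (hapow k) _ (norm_nonneg _) (by positivity)
                calc ‖w ^ (n - k)‖ ≤ ‖w‖ ^ (n - k) := norm_pow_le w (n-k)
                  _ ≤ 1 := pow_le_one₀ (norm_nonneg _) hw1
            _ = M * (1/2) ^ k * (n.choose k : ℝ) := by ring
      _ = M * (1/2 + 1) ^ n := by
          rw [add_pow, Finset.mul_sum]
          apply Finset.sum_congr rfl
          intro k _
          rw [one_pow]
          ring
      _ ≤ M * (7/4) ^ n := by
          apply mul_le_mul_of_nonneg_left _ (by linarith)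
          apply pow_le_pow_left₀ (by norm_num) (by norm_num)
  have hunit : IsUnit ((2:A) - (a + w)) := isUnit_two_sub (a + w) M hM1 hzpow
  have hunit' : IsUnit ((a + w) - 2) := by
    rw [← neg_sub ((2:A)) (a + w)]
    exact hunit.neg
  have haw : a = w := by
    have h0 : ((a + w) - 2) * (a - w) = ((a + w) - 2) * 0 := by rw [hkey, mul_zero]
    have := hunit'.mul_left_cancel h0
    linear_combination (norm := abel_nf) this
  rw [haw]
  exact hwnorm


end Aux



/-- If `C` is a cosine family in a unital complex Banach algebra with
`ρ(C t - 1) = 0` for all `t`, and `‖C (2s) - 1‖ ≤ 2` for some `s`, then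
`‖1 - C s‖ ≤ 1 - √(1 - ‖1 - C(2s)‖/2) ≤ 1`. -/
theorem cosine_norm_sqrt_bound {A : Type*} [NormedRing A] [NormedAlgebra ℂ A]
    [NormOneClass A] [CompleteSpace A] (C : ℝ → A)
    (hC0 : C 0 = 1)
    (hC : ∀ s t : ℝ, C (t + s) + C (t - s) = 2 * (C t * C s))
    (hρ : ∀ t : ℝ, spectralRadius ℂ (C t - 1) = 0)
    (s : ℝ) (h2s : ‖C (2 * s) - 1‖ ≤ 2) :
    ‖1 - C s‖ ≤ 1 - Real.sqrt (1 - ‖1 - C (2 * s)‖ / 2) ∧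
    1 - Real.sqrt (1 - ‖1 - C (2 * s)‖ / 2) ≤ 1 := by
  set a : A := 1 - C s with hadef
  have ha : spectralRadius ℂ (-a) = 0 := by
    rw [hadef, neg_sub]
    exact hρ s
  have h2 : C (2*s) = 2 * (C s * C s) - 1 := by
    have h := hC s s
    rw [sub_self, hC0, ← two_mul] at h
    linear_combination (norm := abel_nf) h
  have hxx : (1 : A) - C (2*s) = (a + a - a * a) + (a + a - a * a) := by
    rw [hadef, h2]
    noncomm_ring
  have hnorm2 : ‖(1:A) - C (2*s)‖ = 2 * ‖a + a - a * a‖ := by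
    rw [hxx, ← two_smul ℂ (a + a - a * a), norm_smul]
    norm_num
  have hxle : ‖a + a - a * a‖ ≤ 1 := by
    have : ‖(1:A) - C (2*s)‖ ≤ 2 := by
      rw [norm_sub_rev]; exact h2s
    rw [hnorm2] at this
    linarith
  have hmain := quasinil_bound a ha hxle
  have hxval : ‖a + a - a * a‖ = ‖(1:A) - C (2*s)‖ / 2 := by
    rw [hnorm2]; ring
  constructor
  · rw [hxval] at hmain
    exact hmain
  · have := Real.sqrt_nonneg (1 - ‖(1:A) - C (2*s)‖ / 2)
    linarith
end

section
/- The scalar sequence c : ℤ → ℝ defined by c(n) = cos(2πn/3) is a discrete cosine family (c(0) = 1 and c(n+m) + c(n−m) = 2·c(n)·c(m) for all n, m ∈ ℤ) which is not identically 1 and satisfies limsup_{n→∞} |c(n) − 1| = 3/2. In particular, the constant 3/2 in the discrete limsup-law for cosine sequences cannot be improved. -/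
open Real Filter

private lemma cos_two_pi_div_three' : Real.cos (2 * Real.pi / 3) = -(1/2) := by
  have h : 2 * Real.pi / 3 = Real.pi - Real.pi / 3 := by ring
  rw [h, Real.cos_pi_sub, Real.cos_pi_div_three]

private lemma key (n : ℕ) :
    |Real.cos (2 * Real.pi * n / 3) - 1| = if n % 3 = 0 then 0 else 3/2 := by
  obtain ⟨q, r, hr, rfl⟩ : ∃ q r : ℕ, r < 3 ∧ n = 3 * q + r :=
    ⟨n / 3, n % 3, Nat.mod_lt _ (by norm_num), (Nat.div_add_mod n 3).symm⟩
  have h1 : (2 * Real.pi * (3 * q + r : ℕ) / 3) = 2 * Real.pi * r / 3 + (q : ℤ) * (2 * Real.pi) := by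
    push_cast; ring
  rw [h1, Real.cos_add_int_mul_two_pi]
  interval_cases r
  · simp
  · rw [if_neg (by omega)]
    rw [show (2 * Real.pi * ((1:ℕ):ℝ) / 3) = 2 * Real.pi / 3 by push_cast; ring,
      cos_two_pi_div_three']
    rw [show (-(1/2) - 1 : ℝ) = -(3/2) by ring, abs_neg, abs_of_nonneg (by norm_num)]
  · rw [if_neg (by omega)]
    rw [show (2 * Real.pi * ((2:ℕ):ℝ) / 3) = 2 * Real.pi - 2 * Real.pi / 3 by push_cast; ring,
      Real.cos_two_pi_sub, cos_two_pi_div_three']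
    rw [show (-(1/2) - 1 : ℝ) = -(3/2) by ring, abs_neg, abs_of_nonneg (by norm_num)]

/-- The sequence `c n = cos (2πn/3)` is a discrete cosine family which is not
identically `1` and satisfies `limsup_{n → ∞} |c n - 1| = 3/2`, showing the
optimality of the constant `3/2` in the discrete limsup-law. -/
theorem discrete_limsup_law_optimal :
    (fun n : ℤ => Real.cos (2 * Real.pi * n / 3)) 0 = 1 ∧
    (∀ n m : ℤ, Real.cos (2 * Real.pi * (n + m) / 3) +
        Real.cos (2 * Real.pi * (n - m) / 3) =
        2 * (Real.cos (2 * Real.pi * n / 3) * Real.cos (2 * Real.pi * m / 3))) ∧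
    (∃ n : ℤ, Real.cos (2 * Real.pi * n / 3) ≠ 1) ∧
    Filter.limsup (fun n : ℕ => |Real.cos (2 * Real.pi * n / 3) - 1|)
      Filter.atTop = 3 / 2 := by
  refine ⟨by norm_num, ?_, ⟨1, ?_⟩, ?_⟩
  · intro n m
    push_cast
    rw [show 2 * Real.pi * ((n:ℝ) + m) / 3 = 2 * Real.pi * n / 3 + 2 * Real.pi * m / 3 by ring,
      show 2 * Real.pi * ((n:ℝ) - m) / 3 = 2 * Real.pi * n / 3 - 2 * Real.pi * m / 3 by ring,
      Real.cos_add, Real.cos_sub]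
    ring
  · rw [show (2 * Real.pi * ((1:ℤ):ℝ) / 3 : ℝ) = 2 * Real.pi / 3 by push_cast; ring,
      cos_two_pi_div_three']
    norm_num
  · have hb : ∀ n : ℕ, |Real.cos (2 * Real.pi * n / 3) - 1| ≤ 3/2 := by
      intro n; rw [key n]; split <;> norm_num
    have hbd : IsBoundedUnder (· ≥ ·) atTop
        (fun n : ℕ => |Real.cos (2 * Real.pi * n / 3) - 1|) :=
      isBoundedUnder_of ⟨0, fun n => abs_nonneg _⟩
    apply le_antisymm
    · exact limsup_le_of_le hbd.isCoboundedUnder_le (Eventually.of_forall hb)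
    · refine le_limsup_of_frequently_le ?_ ⟨3/2, eventually_map.mpr (Eventually.of_forall hb)⟩
      rw [frequently_atTop]
      intro a
      refine ⟨3 * a + 1, by omega, ?_⟩
      rw [key, if_neg (by omega)]
end
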